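/- arXiv:1901.01618 — 7 statements merged into one kernel-verified Lean document; each statement's English description precedes it below -/
import Mathlib

section
/- Let (Λ, Σ) be a measurable space and μ, ν, χ probability measures. Suppose there exist measurable functions g_ψ, g_φ, g₀ : Λ → [0,1] arising from a three-outcome measurement (i.e., there exist measurable p₁, p₂, p₃ : Λ → [0,1] with p₁+p₂+p₃ = 1 pointwise, g_ψ = p₂+p₃, g_φ = p₁+p₃, g₀ = p₁+p₂) such that ∫ g_ψ dμ = ∫ g_φ dν = ∫ g₀ dχ = 1. Then for any Ω ∈ Σ with ν(Ω) = χ(Ω) = 1, there exist Ω′, Ω″ ∈ Σ with ν(Ω′) = 1, χ(Ω″) = 1, and μ(Ω) ≥ μ(Ω′) + μ(Ω″). -/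
open MeasureTheory

lemma vanish_aux {Λ : Type*} [MeasurableSpace Λ] (κ : Measure Λ) [IsProbabilityMeasure κ]
    (p : Λ → ℝ) (hmp : Measurable p) (hp0 : ∀ l, 0 ≤ p l) (hp1 : ∀ l, p l ≤ 1)
    (h : ∫ l, (1 - p l) ∂κ = 1) : p =ᵐ[κ] 0 := by
  have hint : Integrable p κ := by
    refine (integrable_const (1:ℝ)).mono' hmp.aestronglyMeasurable ?_
    exact Filter.Eventually.of_forall fun l => by
      rw [Real.norm_eq_abs]; exact abs_le.2 ⟨by linarith [hp0 l], hp1 l⟩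
  have heq : ∫ l, (1 - p l) ∂κ = 1 - ∫ l, p l ∂κ := by
    rw [integral_sub (integrable_const 1) hint, integral_const]
    simp
  have hz : ∫ l, p l ∂κ = 0 := by rw [heq] at h; linarith
  exact (integral_eq_zero_iff_of_nonneg hp0 hint).mp hz

lemma one_of_ae {Λ : Type*} [MeasurableSpace Λ] (κ : Measure Λ) [IsProbabilityMeasure κ]
    (s : Set Λ) (h : ∀ᵐ l ∂κ, l ∈ s) : κ s = 1 := by
  have := measure_congr (Filter.eventuallyEq_univ.mpr h)
  simpa using this

lemma ae_of_one {Λ : Type*} [MeasurableSpace Λ] (κ : Measure Λ) [IsProbabilityMeasure κ]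
    (s : Set Λ) (hs : MeasurableSet s) (h : κ s = 1) : ∀ᵐ l ∂κ, l ∈ s := by
  rw [Filter.Eventually, mem_ae_iff]
  exact (prob_compl_eq_zero_iff hs).mpr h

theorem stmt3 {Λ : Type*} [MeasurableSpace Λ] (μ ν χ : Measure Λ)
    [IsProbabilityMeasure μ] [IsProbabilityMeasure ν] [IsProbabilityMeasure χ]
    (p₁ p₂ p₃ : Λ → ℝ)
    (hm₁ : Measurable p₁) (hm₂ : Measurable p₂) (hm₃ : Measurable p₃)
    (h₁0 : ∀ l, 0 ≤ p₁ l) (h₁1 : ∀ l, p₁ l ≤ 1)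
    (h₂0 : ∀ l, 0 ≤ p₂ l) (h₂1 : ∀ l, p₂ l ≤ 1)
    (h₃0 : ∀ l, 0 ≤ p₃ l) (h₃1 : ∀ l, p₃ l ≤ 1)
    (hsum : ∀ l, p₁ l + p₂ l + p₃ l = 1)
    (hgψ : ∫ l, (p₂ l + p₃ l) ∂μ = 1)
    (hgφ : ∫ l, (p₁ l + p₃ l) ∂ν = 1)
    (hg₀ : ∫ l, (p₁ l + p₂ l) ∂χ = 1)
    (Ω : Set Λ) (hΩ : MeasurableSet Ω) (hνΩ : ν Ω = 1) (hχΩ : χ Ω = 1) :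
    ∃ Ω' Ω'' : Set Λ, MeasurableSet Ω' ∧ MeasurableSet Ω'' ∧
      ν Ω' = 1 ∧ χ Ω'' = 1 ∧ μ Ω' + μ Ω'' ≤ μ Ω := by
  have h1 : p₁ =ᵐ[μ] 0 := by
    refine vanish_aux μ p₁ hm₁ h₁0 h₁1 ?_
    rw [← hgψ]; exact integral_congr_ae (Filter.Eventually.of_forall fun l => by
      have := hsum l; dsimp only; linarith)
  have h2 : p₂ =ᵐ[ν] 0 := by
    refine vanish_aux ν p₂ hm₂ h₂0 h₂1 ?_
    rw [← hgφ]; exact integral_congr_ae (Filter.Eventually.of_forall fun l => by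
      have := hsum l; dsimp only; linarith)
  have h3 : p₃ =ᵐ[χ] 0 := by
    refine vanish_aux χ p₃ hm₃ h₃0 h₃1 ?_
    rw [← hg₀]; exact integral_congr_ae (Filter.Eventually.of_forall fun l => by
      have := hsum l; dsimp only; linarith)
  set A : Set Λ := {l | p₂ l = 0} with hA
  set B : Set Λ := {l | p₃ l = 0} with hB
  have hmA : MeasurableSet A := hm₂ (measurableSet_singleton 0)
  have hmB : MeasurableSet B := hm₃ (measurableSet_singleton 0)
  refine ⟨Ω ∩ A, Ω ∩ B, hΩ.inter hmA, hΩ.inter hmB, ?_, ?_, ?_⟩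
  · exact one_of_ae ν _ ((ae_of_one ν Ω hΩ hνΩ).and (h2.mono fun l hl => hl))
  · exact one_of_ae χ _ ((ae_of_one χ Ω hΩ hχΩ).and (h3.mono fun l hl => hl))
  · have hinter : μ ((Ω ∩ A) ∩ (Ω ∩ B)) = 0 := by
      refine measure_mono_null ?_ (by
        have : μ {l | p₁ l ≠ 0} = 0 := by
          simpa [Filter.EventuallyEq, ae_iff] using h1
        exact this)
      intro l hl
      have h2' : p₂ l = 0 := hl.1.2
      have h3' : p₃ l = 0 := hl.2.2
      have := hsum l
      simp only [Set.mem_setOf_eq]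
      intro h0; rw [h0, h2', h3'] at this; norm_num at this
    have := measure_union_add_inter (μ := μ) (Ω ∩ A) (hΩ.inter hmB)
    calc μ (Ω ∩ A) + μ (Ω ∩ B) = μ ((Ω ∩ A) ∪ (Ω ∩ B)) + μ ((Ω ∩ A) ∩ (Ω ∩ B)) := this.symm
      _ = μ ((Ω ∩ A) ∪ (Ω ∩ B)) := by rw [hinter, add_zero]
      _ ≤ μ Ω := measure_mono (by intro l hl; rcases hl with h | h <;> exact h.1)
end

section
/- Let 𝓗 be a complex Hilbert space of dimension d > 3, and fix α ∈ (0, 1/√2). Let {|0⟩, |1⟩, |2⟩, |3⟩, ...} be an orthonormal basis. Define β := √2·α², |ψ⟩ := α|0⟩ + β|1⟩ + τ|2⟩ where τ := √(1 − α² − β²) > 0, and |φ⟩ := δ|0⟩ + η|1⟩ + κ|3⟩ where δ := 1 − 2α², η := √2·α, κ := √(1 − δ² − η²). Then (i) |⟨0|ψ⟩|² = |⟨φ|ψ⟩|² = α², and (ii) the numbers a = |⟨φ|ψ⟩|², b = |⟨0|ψ⟩|², c = |⟨0|φ⟩|² satisfy a + b + c < 1 and (1 − a − b − c)² ≥ 4abc.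 -/
open Matrix

theorem stmt5 {d : ℕ} (hd : 3 < d) (α : ℝ) (hα0 : 0 < α) (hα : α < 1 / Real.sqrt 2)
    (β τ δ η κ : ℝ)
    (hβ : β = Real.sqrt 2 * α ^ 2)
    (hτ : τ = Real.sqrt (1 - α ^ 2 - β ^ 2))
    (hδ : δ = 1 - 2 * α ^ 2)
    (hη : η = Real.sqrt 2 * α)
    (hκ : κ = Real.sqrt (1 - δ ^ 2 - η ^ 2))
    (ψ φ : Fin d → ℂ)
    (hψ : ψ = fun i => if i = ⟨0, by omega⟩ then (α : ℂ)
      else if i = ⟨1, by omega⟩ then (β : ℂ)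
      else if i = ⟨2, by omega⟩ then (τ : ℂ) else 0)
    (hφ : φ = fun i => if i = ⟨0, by omega⟩ then (δ : ℂ)
      else if i = ⟨1, by omega⟩ then (η : ℂ)
      else if i = ⟨3, by omega⟩ then (κ : ℂ) else 0) :
    (Complex.normSq (ψ ⟨0, by omega⟩) = α ^ 2 ∧
      Complex.normSq (star φ ⬝ᵥ ψ) = α ^ 2) ∧
    (Complex.normSq (star φ ⬝ᵥ ψ) + Complex.normSq (ψ ⟨0, by omega⟩) +
        Complex.normSq (φ ⟨0, by omega⟩) < 1 ∧
      4 * Complex.normSq (star φ ⬝ᵥ ψ) * Complex.normSq (ψ ⟨0, by omega⟩) *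
          Complex.normSq (φ ⟨0, by omega⟩) ≤
        (1 - Complex.normSq (star φ ⬝ᵥ ψ) - Complex.normSq (ψ ⟨0, by omega⟩) -
            Complex.normSq (φ ⟨0, by omega⟩)) ^ 2) := by
  have h2 : Real.sqrt 2 * Real.sqrt 2 = 2 := Real.mul_self_sqrt (by norm_num)
  have ht : α ^ 2 < 1 / 2 := by
    have hs : (0:ℝ) < Real.sqrt 2 := Real.sqrt_pos.mpr (by norm_num)
    have : α * α < (1 / Real.sqrt 2) * (1 / Real.sqrt 2) :=
      mul_lt_mul'' hα hα hα0.le hα0.le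
    calc α ^ 2 = α * α := sq α
      _ < (1 / Real.sqrt 2) * (1 / Real.sqrt 2) := this
      _ = 1 / 2 := by field_simp [h2]; rw [Real.sq_sqrt (by norm_num)]
  have hdot : star φ ⬝ᵥ ψ = (α : ℂ) := by
    subst hψ hφ
    rw [dotProduct]
    have hfun : ∀ i : Fin d,
        star ((fun i => if i = ⟨0, by omega⟩ then (δ : ℂ)
          else if i = ⟨1, by omega⟩ then (η : ℂ)
          else if i = ⟨3, by omega⟩ then (κ : ℂ) else 0) : Fin d → ℂ) i *
        (fun i => if i = ⟨0, by omega⟩ then (α : ℂ)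
          else if i = ⟨1, by omega⟩ then (β : ℂ)
          else if i = ⟨2, by omega⟩ then (τ : ℂ) else 0) i =
        (if i = (⟨0, by omega⟩ : Fin d) then ((δ * α : ℝ) : ℂ) else 0) +
        (if i = (⟨1, by omega⟩ : Fin d) then ((η * β : ℝ) : ℂ) else 0) := by
      intro i
      simp only [Pi.star_apply]
      by_cases h0 : i = (⟨0, by omega⟩ : Fin d)
      · subst h0; simp [Fin.ext_iff, Complex.ofReal_mul]
      · by_cases h1 : i = (⟨1, by omega⟩ : Fin d)
        · subst h1; simp [Fin.ext_iff, Complex.ofReal_mul]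
        · by_cases h2' : i = (⟨2, by omega⟩ : Fin d)
          · subst h2'; simp [Fin.ext_iff]
          · by_cases h3 : i = (⟨3, by omega⟩ : Fin d)
            · subst h3; simp [Fin.ext_iff]
            · simp [h0, h1, h2', h3]
    rw [Finset.sum_congr rfl (fun i _ => hfun i), Finset.sum_add_distrib]
    simp only [Finset.sum_ite_eq', Finset.mem_univ, if_true]
    rw [← Complex.ofReal_add]
    congr 1
    subst hβ hη hδ
    nlinarith [h2]
  have hψ0 : ψ ⟨0, by omega⟩ = (α : ℂ) := by subst hψ; simp
  have hφ0 : φ ⟨0, by omega⟩ = (δ : ℂ) := by subst hφ; simp [Fin.ext_iff]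
  simp only [hdot, hψ0, hφ0, Complex.normSq_ofReal]
  subst hδ
  refine ⟨⟨by ring, by ring⟩, ?_, ?_⟩
  · nlinarith [ht, mul_pos hα0 hα0, sq_nonneg α]
  · nlinarith [sq_nonneg (α*α), sq_nonneg (1 - 2*α^2)]
end

section
/- Let ρ_{BC|A} be the Choi-Jamiołkowski operator of a completely positive trace-preserving map from system A to the composite system B⊗C (normalized so that Tr_{BC} ρ_{BC|A} = 𝟙_{A*}), and let ρ_{B|A} := Tr_C ρ_{BC|A}, ρ_{C|A} := Tr_B ρ_{BC|A}. If ρ_{BC|A} = ρ_{B|A} · ρ_{C|A}, then [ρ_{B|A}, ρ_{C|A}] = 0, and the quantum conditional mutual information I(B : C | A) evaluated on the normalized state ρ̂_{BC|A} := ρ_{BC|A}/d_A vanishes. -/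
open Matrix
open scoped ComplexOrder

noncomputable section

/-- Von Neumann entropy of a matrix: `-∑ λᵢ log λᵢ` over the eigenvalues when the
matrix is Hermitian, and `0` (junk value) otherwise. -/
noncomputable def vnEntropy {n : Type*} [Fintype n] [DecidableEq n]
    (ρ : Matrix n n ℂ) : ℝ :=
  if h : ρ.IsHermitian then ∑ i, Real.negMulLog (h.eigenvalues i) else 0

variable {b c a : Type*} [Fintype b] [DecidableEq b] [Fintype c] [DecidableEq c]
  [Fintype a] [DecidableEq a]

/-- Partial trace over the `C` factor: marginal on `B ⊗ A*`. -/
def margBA (ρ : Matrix (b × c × a) (b × c × a) ℂ) : Matrix (b × a) (b × a) ℂ :=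
  Matrix.of fun p q => ∑ y : c, ρ (p.1, y, p.2) (q.1, y, q.2)

/-- Partial trace over the `B` factor: marginal on `C ⊗ A*`. -/
def margCA (ρ : Matrix (b × c × a) (b × c × a) ℂ) : Matrix (c × a) (c × a) ℂ :=
  Matrix.of fun p q => ∑ x : b, ρ (x, p.1, p.2) (x, q.1, q.2)

/-- Partial trace over the `B ⊗ C` factor: marginal on `A*`. -/
def margA (ρ : Matrix (b × c × a) (b × c × a) ℂ) : Matrix a a ℂ :=
  Matrix.of fun s t => ∑ x : b, ∑ y : c, ρ (x, y, s) (x, y, t)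

/-- Quantum conditional mutual information `I(B : C | A)` of an operator on
`B ⊗ C ⊗ A*`: `S(ρ_{BA}) + S(ρ_{CA}) − S(ρ_{BCA}) − S(ρ_A)`. -/
noncomputable def cmi (ρ : Matrix (b × c × a) (b × c × a) ℂ) : ℝ :=
  vnEntropy (margBA ρ) + vnEntropy (margCA ρ) - vnEntropy ρ - vnEntropy (margA ρ)

/-- Embed an operator on `B ⊗ A*` into `B ⊗ C ⊗ A*` (tensoring with the identity on `C`). -/
def liftB (M : Matrix (b × a) (b × a) ℂ) : Matrix (b × c × a) (b × c × a) ℂ :=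
  Matrix.of fun p q => if p.2.1 = q.2.1 then M (p.1, p.2.2) (q.1, q.2.2) else 0

/-- Embed an operator on `C ⊗ A*` into `B ⊗ C ⊗ A*` (tensoring with the identity on `B`). -/
def liftC (M : Matrix (c × a) (c × a) ℂ) : Matrix (b × c × a) (b × c × a) ℂ :=
  Matrix.of fun p q => if p.1 = q.1 then M p.2 q.2 else 0

/-! ### Auxiliary material -/

namespace Stmt8Aux

open Polynomial Module.End

set_option linter.unusedSectionVars false

section Generic

variable {n : Type*} [Fintype n] [DecidableEq n]

/-- Conjugation by a unitary as an algebra homomorphism. -/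
def conjAlgHom (U : Matrix.unitaryGroup n ℂ) : Matrix n n ℂ →ₐ[ℂ] Matrix n n ℂ where
  toFun A := (U : Matrix n n ℂ) * A * star (U : Matrix n n ℂ)
  map_one' := by
    show (U : Matrix n n ℂ) * 1 * star (U : Matrix n n ℂ) = 1
    rw [Matrix.mul_one]
    exact Matrix.mem_unitaryGroup_iff.mp U.2
  map_mul' A B := by
    have h : star (U : Matrix n n ℂ) * (U : Matrix n n ℂ) = 1 :=
      Matrix.UnitaryGroup.star_mul_self U
    simp only [Matrix.mul_assoc]
    rw [← Matrix.mul_assoc (star (U : Matrix n n ℂ)) (U : Matrix n n ℂ), h, Matrix.one_mul]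
  map_zero' := by simp
  map_add' A B := by noncomm_ring
  commutes' r := by
    simp only [Algebra.algebraMap_eq_smul_one, Matrix.mul_smul, Matrix.smul_mul, Matrix.mul_one]
    congr 1
    exact Matrix.mem_unitaryGroup_iff.mp U.2

lemma aeval_diagonal (v : n → ℂ) (p : ℂ[X]) :
    aeval (diagonal v) p = diagonal (fun i => p.eval (v i)) := by
  rw [show diagonal v = Matrix.diagonalAlgHom ℂ v from rfl, aeval_algHom_apply]
  have h2 : (aeval v) p = fun i => p.eval (v i) := by
    funext i
    rw [show (aeval v p) i = (Pi.evalAlgHom ℂ (fun _ : n => ℂ) i) (aeval v p) from rfl,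
      ← aeval_algHom_apply]
    simp
  rw [h2]
  rfl

lemma aeval_conj_diag (U : Matrix.unitaryGroup n ℂ) (v : n → ℂ) (p : ℂ[X]) :
    aeval ((U : Matrix n n ℂ) * diagonal v * star (U : Matrix n n ℂ)) p
      = (U : Matrix n n ℂ) * diagonal (fun i => p.eval (v i)) * star (U : Matrix n n ℂ) := by
  have := aeval_algHom_apply (conjAlgHom U) (diagonal v) p
  simp only [conjAlgHom, AlgHom.coe_mk, RingHom.coe_mk, MonoidHom.coe_mk, OneHom.coe_mk] at this
  rw [this, aeval_diagonal]

lemma trace_conj_diag (U : Matrix.unitaryGroup n ℂ) (v : n → ℂ) :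
    ((U : Matrix n n ℂ) * diagonal v * star (U : Matrix n n ℂ)).trace = ∑ i, v i := by
  rw [Matrix.trace_mul_cycle, Matrix.UnitaryGroup.star_mul_self,
    Matrix.one_mul, Matrix.trace_diagonal]

lemma conj_diag_mul (U : Matrix.unitaryGroup n ℂ) (v w : n → ℂ) :
    ((U : Matrix n n ℂ) * diagonal v * star (U : Matrix n n ℂ))
      * ((U : Matrix n n ℂ) * diagonal w * star (U : Matrix n n ℂ))
      = (U : Matrix n n ℂ) * diagonal (fun i => v i * w i) * star (U : Matrix n n ℂ) := by
  have := map_mul (conjAlgHom U) (diagonal v) (diagonal w)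
  simp only [conjAlgHom, AlgHom.coe_mk, RingHom.coe_mk, MonoidHom.coe_mk, OneHom.coe_mk] at this
  rw [← Matrix.diagonal_mul_diagonal]
  exact this.symm

lemma isHermitian_conj_diag (U : Matrix.unitaryGroup n ℂ) (dv : n → ℝ) :
    ((U : Matrix n n ℂ) * diagonal (fun i => (dv i : ℂ))
      * star (U : Matrix n n ℂ)).IsHermitian := by
  have hd : (diagonal (fun i => (dv i : ℂ)))ᴴ = diagonal (fun i => (dv i : ℂ)) := by
    have hs : (star fun i => ((dv i : ℂ))) = fun i => ((dv i : ℂ)) := by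
      funext i
      exact Complex.conj_ofReal _
    rw [Matrix.diagonal_conjTranspose, hs]
  unfold Matrix.IsHermitian
  simp [Matrix.conjTranspose_mul, hd, Matrix.star_eq_conjTranspose, Matrix.mul_assoc]

lemma smul_conj_diag (U : Matrix.unitaryGroup n ℂ) (v : n → ℝ) (r : ℝ) :
    ((r : ℝ) : ℂ) • ((U : Matrix n n ℂ) * diagonal (fun i => (v i : ℂ)) * star (U : Matrix n n ℂ))
      = (U : Matrix n n ℂ) * diagonal (fun i => ((r * v i : ℝ) : ℂ))
        * star (U : Matrix n n ℂ) := by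
  have hdiag : ((r : ℂ)) • diagonal (fun i => (v i : ℂ))
      = diagonal (fun i => ((r * v i : ℝ) : ℂ)) := by
    ext i j
    by_cases h : i = j <;> simp [Matrix.diagonal, h, Complex.ofReal_mul]
  rw [← hdiag, Matrix.mul_smul, Matrix.smul_mul]

lemma sum_negMulLog_smul {k : Type*} [Fintype k] (r : ℝ) (v : k → ℝ) :
    ∑ i, Real.negMulLog (r * v i)
      = (∑ i, v i) * Real.negMulLog r + r * ∑ i, Real.negMulLog (v i) := by
  calc ∑ i, Real.negMulLog (r * v i)
      = ∑ i, (v i * Real.negMulLog r + r * Real.negMulLog (v i)) :=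
        Finset.sum_congr rfl fun i _ => Real.negMulLog_mul r (v i)
    _ = _ := by rw [Finset.sum_add_distrib, ← Finset.sum_mul, ← Finset.mul_sum]

lemma sum_negMulLog_neg {k : Type*} [Fintype k] (v : k → ℝ) :
    ∑ j, Real.negMulLog (v j) = -∑ j, v j * Real.log (v j) := by
  unfold Real.negMulLog
  rw [← Finset.sum_neg_distrib]
  exact Finset.sum_congr rfl fun j _ => by ring

lemma vnEntropy_of_isEmpty {k : Type*} [Fintype k] [DecidableEq k] [IsEmpty k]
    (H : Matrix k k ℂ) : vnEntropy H = 0 := by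
  unfold vnEntropy
  split <;> simp

/-- Equality of spectral sums computed from two unitary-diagonal decompositions. -/
lemma sum_eval_eq_sum_eval (U : Matrix.unitaryGroup n ℂ) (dv : n → ℝ)
    (V : Matrix.unitaryGroup n ℂ) (ev : n → ℝ) {H : Matrix n n ℂ}
    (h1 : H = (U : Matrix n n ℂ) * diagonal (fun i => (dv i : ℂ)) * star (U : Matrix n n ℂ))
    (h2 : H = (V : Matrix n n ℂ) * diagonal (fun i => (ev i : ℂ)) * star (V : Matrix n n ℂ))
    (f : ℝ → ℝ) : ∑ i, f (dv i) = ∑ i, f (ev i) := by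
  classical
  set s : Finset ℂ := (Finset.image (fun i => ((dv i : ℂ))) Finset.univ)
    ∪ (Finset.image (fun i => ((ev i : ℂ))) Finset.univ) with hs
  set F : ℂ → ℂ := fun z => ((f z.re : ℝ) : ℂ) with hF
  set p : ℂ[X] := Lagrange.interpolate s id F with hp
  have hnode : ∀ x ∈ s, p.eval x = F x := by
    intro x hx
    exact Lagrange.eval_interpolate_at_node F (Set.injOn_id _) hx
  have w1 : (aeval H p).trace = ∑ i, ((f (dv i) : ℝ) : ℂ) := by
    rw [h1, aeval_conj_diag, trace_conj_diag]
    refine Finset.sum_congr rfl fun i _ => ?_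
    have : ((dv i : ℂ)) ∈ s := by
      rw [hs]; exact Finset.mem_union_left _ (Finset.mem_image_of_mem _ (Finset.mem_univ i))
    rw [hnode _ this, hF]
    simp
  have w2 : (aeval H p).trace = ∑ i, ((f (ev i) : ℝ) : ℂ) := by
    rw [h2, aeval_conj_diag, trace_conj_diag]
    refine Finset.sum_congr rfl fun i _ => ?_
    have : ((ev i : ℂ)) ∈ s := by
      rw [hs]; exact Finset.mem_union_right _ (Finset.mem_image_of_mem _ (Finset.mem_univ i))
    rw [hnode _ this, hF]
    simp
  have := w1.symm.trans w2
  rw [← Complex.ofReal_sum, ← Complex.ofReal_sum] at this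
  exact_mod_cast this

lemma vnEntropy_eq (U : Matrix.unitaryGroup n ℂ) (dv : n → ℝ) {H : Matrix n n ℂ}
    (hH : H = (U : Matrix n n ℂ) * diagonal (fun i => (dv i : ℂ)) * star (U : Matrix n n ℂ)) :
    vnEntropy H = ∑ i, Real.negMulLog (dv i) := by
  have hHerm : H.IsHermitian := hH ▸ isHermitian_conj_diag U dv
  have hspec : H = (hHerm.eigenvectorUnitary : Matrix n n ℂ)
      * diagonal (fun i => ((hHerm.eigenvalues i : ℝ) : ℂ))
      * star (hHerm.eigenvectorUnitary : Matrix n n ℂ) := hHerm.spectral_theorem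
  rw [vnEntropy, dif_pos hHerm]
  exact (sum_eval_eq_sum_eval U dv hHerm.eigenvectorUnitary hHerm.eigenvalues hH hspec
    Real.negMulLog).symm

lemma eq_conj_diag_of_forall_mulVec {X U : Matrix n n ℂ}
    (hU : U ∈ Matrix.unitaryGroup n ℂ) {d : n → ℂ}
    (h : ∀ j, X *ᵥ (fun pt => U pt j) = fun pt => d j * U pt j) :
    X = U * diagonal d * star U := by
  have hXU : X * U = U * diagonal d := by
    ext pt j
    have h1 := congrFun (h j) pt
    rw [Matrix.mul_diagonal]
    rw [Matrix.mul_apply]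
    simpa [Matrix.mulVec, dotProduct, mul_comm] using h1
  calc X = X * (U * star U) := by rw [Matrix.mem_unitaryGroup_iff.mp hU, Matrix.mul_one]
    _ = (X * U) * star U := by rw [Matrix.mul_assoc]
    _ = U * diagonal d * star U := by rw [hXU]

lemma toEuclideanLin_mul (P Q : Matrix n n ℂ) :
    toEuclideanLin (P * Q) = (toEuclideanLin P) ∘ₗ (toEuclideanLin Q) := by
  ext v
  simp [Matrix.toEuclideanLin_apply, Matrix.mulVec_mulVec]

set_option maxHeartbeats 1000000 in
/-- Simultaneous unitary diagonalization of two commuting Hermitian matrices. -/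
lemma simul_diag {X Y : Matrix n n ℂ} (hX : X.IsHermitian) (hY : Y.IsHermitian)
    (hXY : X * Y = Y * X) :
    ∃ (U : Matrix.unitaryGroup n ℂ) (μ ν : n → ℝ),
      X = (U : Matrix n n ℂ) * diagonal (fun i => (μ i : ℂ)) * star (U : Matrix n n ℂ) ∧
      Y = (U : Matrix n n ℂ) * diagonal (fun i => (ν i : ℂ)) * star (U : Matrix n n ℂ) := by
  classical
  set A := toEuclideanLin X with hA'
  set B := toEuclideanLin Y with hB'
  have hA : A.IsSymmetric := isHermitian_iff_isSymmetric.mp hX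
  have hB : B.IsSymmetric := isHermitian_iff_isSymmetric.mp hY
  have hcomm : Commute A B := by
    have h1 : A ∘ₗ B = B ∘ₗ A := by
      rw [hA', hB', ← toEuclideanLin_mul, ← toEuclideanLin_mul, hXY]
    simpa [Commute, SemiconjBy, Module.End.mul_eq_comp] using h1
  have internal := hA.directSum_isInternal_of_commute hB hcomm
  have orth := hA.orthogonalFamily_eigenspace_inf_eigenspace hB
  set V : ℂ × ℂ → Submodule ℂ (EuclideanSpace ℂ n) :=
    fun i => eigenspace A i.2 ⊓ eigenspace B i.1 with hV
  haveI : DecidableEq {i : ℂ × ℂ // V i ≠ ⊥} := Classical.decEq _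
  have hindep : iSupIndep V := internal.submodule_iSupIndep
  haveI : Fintype {i : ℂ × ℂ // V i ≠ ⊥} := hindep.fintypeNeBotOfFiniteDimensional
  have internal' : DirectSum.IsInternal (fun i : {i : ℂ × ℂ // V i ≠ ⊥} => V i.1) := by
    rw [DirectSum.isInternal_submodule_iff_iSupIndep_and_iSup_eq_top]
    constructor
    · exact hindep.comp Subtype.val_injective
    · rw [iSup_ne_bot_subtype]
      exact ((DirectSum.isInternal_submodule_iff_iSupIndep_and_iSup_eq_top _).mp internal).2
  have orth' := orth.comp (f := (Subtype.val : {i : ℂ × ℂ // V i ≠ ⊥} → ℂ × ℂ))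
    Subtype.val_injective
  have hn : Module.finrank ℂ (EuclideanSpace ℂ n) = Fintype.card n := finrank_euclideanSpace
  set w0 := internal'.subordinateOrthonormalBasis hn orth' with hw0
  set e : n ≃ Fin (Fintype.card n) := Fintype.equivFinOfCardEq rfl with he
  set w : n → EuclideanSpace ℂ n := fun j => w0 (e j) with hw
  set idx : n → ℂ × ℂ := fun j =>
    (internal'.subordinateOrthonormalBasisIndex hn (e j) orth').1 with hidx
  have hmem : ∀ j, w j ∈ eigenspace A (idx j).2 ⊓ eigenspace B (idx j).1 := fun j =>
    internal'.subordinateOrthonormalBasis_subordinate hn (e j) orth'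
  have hwne : ∀ j, w j ≠ 0 := fun j => by simpa using w0.toBasis.ne_zero (e j)
  have hAw : ∀ j, A (w j) = (idx j).2 • w j := fun j =>
    Module.End.mem_eigenspace_iff.mp (hmem j).1
  have hBw : ∀ j, B (w j) = (idx j).1 • w j := fun j =>
    Module.End.mem_eigenspace_iff.mp (hmem j).2
  have hreμ : ∀ j, ((((idx j).2).re : ℝ) : ℂ) = (idx j).2 := by
    intro j
    have := hA.conj_eigenvalue_eq_self
      (Module.End.hasEigenvalue_of_hasEigenvector ⟨(hmem j).1, hwne j⟩)
    exact Complex.conj_eq_iff_re.mp this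
  have hreν : ∀ j, ((((idx j).1).re : ℝ) : ℂ) = (idx j).1 := by
    intro j
    have := hB.conj_eigenvalue_eq_self
      (Module.End.hasEigenvalue_of_hasEigenvector ⟨(hmem j).2, hwne j⟩)
    exact Complex.conj_eq_iff_re.mp this
  set U : Matrix n n ℂ := Matrix.of fun pt j => w j pt with hUdef
  have hU : U ∈ Matrix.unitaryGroup n ℂ := by
    rw [Matrix.mem_unitaryGroup_iff']
    ext i j
    have horth := orthonormal_iff_ite.mp w0.orthonormal (e i) (e j)
    rw [Matrix.mul_apply, Matrix.one_apply]
    simp only [Matrix.conjTranspose_apply, Matrix.star_eq_conjTranspose]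
    simp only [PiLp.inner_apply, RCLike.inner_apply, EmbeddingLike.apply_eq_iff_eq] at horth
    calc ∑ x : n, star (U x i) * U x j
        = ∑ x : n, (starRingEnd ℂ) ((w0 (e i)) x) * ((w0 (e j)) x) :=
          Finset.sum_congr rfl fun x _ => rfl
      _ = if i = j then 1 else 0 := (Finset.sum_congr rfl fun x _ => mul_comm _ _).trans horth
  have hXvec : ∀ j, X *ᵥ (fun pt => U pt j) = fun pt => (idx j).2 * U pt j := by
    intro j
    have h1 := hAw j
    rw [hA', Matrix.toEuclideanLin_apply] at h1
    have h2 := congrArg (WithLp.equiv 2 (n → ℂ)) h1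
    have h3 : X *ᵥ WithLp.ofLp (w j) = (idx j).2 • WithLp.ofLp (w j) := by simpa using h2
    exact h3
  have hYvec : ∀ j, Y *ᵥ (fun pt => U pt j) = fun pt => (idx j).1 * U pt j := by
    intro j
    have h1 := hBw j
    rw [hB', Matrix.toEuclideanLin_apply] at h1
    have h2 := congrArg (WithLp.equiv 2 (n → ℂ)) h1
    have h3 : Y *ᵥ WithLp.ofLp (w j) = (idx j).1 • WithLp.ofLp (w j) := by simpa using h2
    exact h3
  refine ⟨⟨U, hU⟩, fun j => ((idx j).2).re, fun j => ((idx j).1).re, ?_, ?_⟩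
  · refine eq_conj_diag_of_forall_mulVec hU ?_
    intro j
    have h := hXvec j
    rw [← hreμ j] at h
    exact h
  · refine eq_conj_diag_of_forall_mulVec hU ?_
    intro j
    have h := hYvec j
    rw [← hreν j] at h
    exact h

/-- The key trace identity transporting a spectral sum through an algebra embedding. -/
lemma sum_mul_log {n m : Type*} [Fintype n] [DecidableEq n] [Fintype m] [DecidableEq m]
    (U : Matrix.unitaryGroup n ℂ) (lam μv : n → ℝ)
    (V : Matrix.unitaryGroup m ℂ) (em : m → ℝ)
    (ρ Xp : Matrix n n ℂ) (M : Matrix m m ℂ)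
    (L : Matrix m m ℂ →ₐ[ℂ] Matrix n n ℂ)
    (hρ : ρ = (U : Matrix n n ℂ) * diagonal (fun i => (lam i : ℂ)) * star (U : Matrix n n ℂ))
    (hX : Xp = (U : Matrix n n ℂ) * diagonal (fun i => (μv i : ℂ)) * star (U : Matrix n n ℂ))
    (hM : M = (V : Matrix m m ℂ) * diagonal (fun j => (em j : ℂ)) * star (V : Matrix m m ℂ))
    (hLM : L M = Xp)
    (htr : ∀ G : Matrix m m ℂ, (ρ * L G).trace = (M * G).trace) :
    ∑ i, lam i * Real.log (μv i) = ∑ j, em j * Real.log (em j) := by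
  classical
  set s : Finset ℂ := (Finset.image (fun i => ((μv i : ℂ))) Finset.univ)
    ∪ (Finset.image (fun j => ((em j : ℂ))) Finset.univ) with hs
  set F : ℂ → ℂ := fun z => ((Real.log z.re : ℝ) : ℂ) with hF
  set p : ℂ[X] := Lagrange.interpolate s id F with hp
  have hnode : ∀ x ∈ s, p.eval x = F x := fun x hx =>
    Lagrange.eval_interpolate_at_node F (Set.injOn_id _) hx
  have hev1 : (fun i => p.eval ((μv i : ℂ))) = fun i => ((Real.log (μv i) : ℝ) : ℂ) := by
    funext i
    rw [hnode _ (Finset.mem_union_left _ (Finset.mem_image_of_mem _ (Finset.mem_univ i)))]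
    simp [hF]
  have hev2 : (fun j => p.eval ((em j : ℂ))) = fun j => ((Real.log (em j) : ℝ) : ℂ) := by
    funext j
    rw [hnode _ (Finset.mem_union_right _ (Finset.mem_image_of_mem _ (Finset.mem_univ j)))]
    simp [hF]
  have hXp : aeval Xp p = (U : Matrix n n ℂ)
      * diagonal (fun i => ((Real.log (μv i) : ℝ) : ℂ)) * star (U : Matrix n n ℂ) := by
    rw [hX, aeval_conj_diag, hev1]
  have hMp : aeval M p = (V : Matrix m m ℂ)
      * diagonal (fun j => ((Real.log (em j) : ℝ) : ℂ)) * star (V : Matrix m m ℂ) := by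
    rw [hM, aeval_conj_diag, hev2]
  have hL' : aeval Xp p = L (aeval M p) := by rw [← hLM, aeval_algHom_apply]
  have c1 : (ρ * aeval Xp p).trace = ∑ i, ((lam i : ℂ)) * ((Real.log (μv i) : ℝ) : ℂ) := by
    rw [hρ, hXp, conj_diag_mul, trace_conj_diag]
  have c2 : (M * aeval M p).trace = ∑ j, ((em j : ℂ)) * ((Real.log (em j) : ℝ) : ℂ) := by
    rw [hMp, hM, conj_diag_mul, trace_conj_diag]
  have key : (∑ i, ((lam i : ℂ)) * ((Real.log (μv i) : ℝ) : ℂ))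
      = ∑ j, ((em j : ℂ)) * ((Real.log (em j) : ℝ) : ℂ) := by
    rw [← c1, ← c2, hL']
    exact htr _
  have h2 : ((∑ i, lam i * Real.log (μv i) : ℝ) : ℂ)
      = ((∑ j, em j * Real.log (em j) : ℝ) : ℂ) := by
    push_cast
    simpa using key
  exact_mod_cast h2

end Generic

section Lifts

lemma liftB_mul (A B : Matrix (b × a) (b × a) ℂ) :
    liftB (c := c) (A * B) = liftB A * liftB B := by
  ext ⟨x, y, s⟩ ⟨x', y', s'⟩
  simp only [liftB, Matrix.mul_apply, Matrix.of_apply, Fintype.sum_prod_type, ite_mul, mul_ite,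
    zero_mul, mul_zero, Finset.sum_ite_irrel, Finset.sum_const_zero, Finset.sum_ite_eq,
    Finset.sum_ite_eq']
  by_cases h : y = y' <;> simp [h]

lemma liftB_one : liftB (c := c) (1 : Matrix (b × a) (b × a) ℂ) = 1 := by
  ext ⟨x, y, s⟩ ⟨x', y', s'⟩
  simp only [liftB, Matrix.of_apply, Matrix.one_apply, Prod.mk.injEq, Prod.ext_iff]
  by_cases h1 : y = y' <;> by_cases h2 : x = x' <;> by_cases h3 : s = s' <;> simp [h1, h2, h3]

lemma liftC_mul (A B : Matrix (c × a) (c × a) ℂ) :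
    liftC (b := b) (A * B) = liftC A * liftC B := by
  ext ⟨x, y, s⟩ ⟨x', y', s'⟩
  simp only [liftC, Matrix.mul_apply, Matrix.of_apply, Fintype.sum_prod_type, ite_mul, mul_ite,
    zero_mul, mul_zero, Finset.sum_ite_irrel, Finset.sum_const_zero, Finset.sum_ite_eq,
    Finset.sum_ite_eq']
  by_cases h : x = x' <;> simp [h]

lemma liftC_one : liftC (b := b) (1 : Matrix (c × a) (c × a) ℂ) = 1 := by
  ext ⟨x, y, s⟩ ⟨x', y', s'⟩
  simp only [liftC, Matrix.of_apply, Matrix.one_apply, Prod.mk.injEq, Prod.ext_iff]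
  by_cases h1 : y = y' <;> by_cases h2 : x = x' <;> by_cases h3 : s = s' <;> simp [h1, h2, h3]

lemma liftB_conjTranspose (A : Matrix (b × a) (b × a) ℂ) :
    (liftB (c := c) A)ᴴ = liftB Aᴴ := by
  ext ⟨x, y, s⟩ ⟨x', y', s'⟩
  simp only [liftB, Matrix.conjTranspose_apply, Matrix.of_apply]
  by_cases h : y = y' <;> simp [h, eq_comm]

lemma liftC_conjTranspose (A : Matrix (c × a) (c × a) ℂ) :
    (liftC (b := b) A)ᴴ = liftC Aᴴ := by
  ext ⟨x, y, s⟩ ⟨x', y', s'⟩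
  simp only [liftC, Matrix.conjTranspose_apply, Matrix.of_apply]
  by_cases h : x = x' <;> simp [h, eq_comm]

/-- `liftB` as an algebra homomorphism. -/
def liftBAlgHom : Matrix (b × a) (b × a) ℂ →ₐ[ℂ] Matrix (b × c × a) (b × c × a) ℂ where
  toFun := liftB
  map_one' := liftB_one
  map_mul' := liftB_mul
  map_zero' := by
    ext ⟨x, y, s⟩ ⟨x', y', s'⟩
    simp [liftB]
  map_add' A B := by
    ext ⟨x, y, s⟩ ⟨x', y', s'⟩
    by_cases h : y = y' <;> simp [liftB, h]
  commutes' r := by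
    simp only [Algebra.algebraMap_eq_smul_one]
    have h1 : liftB (c := c) (r • (1 : Matrix (b × a) (b × a) ℂ)) = r • liftB 1 := by
      ext ⟨x, y, s⟩ ⟨x', y', s'⟩
      by_cases h : y = y' <;> simp [liftB, h]
    rw [h1, liftB_one]

/-- `liftC` as an algebra homomorphism. -/
def liftCAlgHom : Matrix (c × a) (c × a) ℂ →ₐ[ℂ] Matrix (b × c × a) (b × c × a) ℂ where
  toFun := liftC
  map_one' := liftC_one
  map_mul' := liftC_mul
  map_zero' := by
    ext ⟨x, y, s⟩ ⟨x', y', s'⟩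
    simp [liftC]
  map_add' A B := by
    ext ⟨x, y, s⟩ ⟨x', y', s'⟩
    by_cases h : x = x' <;> simp [liftC, h]
  commutes' r := by
    simp only [Algebra.algebraMap_eq_smul_one]
    have h1 : liftC (b := b) (r • (1 : Matrix (c × a) (c × a) ℂ)) = r • liftC 1 := by
      ext ⟨x, y, s⟩ ⟨x', y', s'⟩
      by_cases h : x = x' <;> simp [liftC, h]
    rw [h1, liftC_one]

lemma margBA_conjTranspose (ρ : Matrix (b × c × a) (b × c × a) ℂ) :
    (margBA ρ)ᴴ = margBA ρᴴ := by
  ext ⟨x, s⟩ ⟨x', s'⟩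
  simp [margBA, Matrix.conjTranspose_apply, map_sum]

lemma margCA_conjTranspose (ρ : Matrix (b × c × a) (b × c × a) ℂ) :
    (margCA ρ)ᴴ = margCA ρᴴ := by
  ext ⟨y, s⟩ ⟨y', s'⟩
  simp [margCA, Matrix.conjTranspose_apply, map_sum]

lemma margBA_smul (z : ℂ) (ρ : Matrix (b × c × a) (b × c × a) ℂ) :
    margBA (z • ρ) = z • margBA ρ := by
  ext ⟨x, s⟩ ⟨x', s'⟩
  simp [margBA, Finset.mul_sum]

lemma margCA_smul (z : ℂ) (ρ : Matrix (b × c × a) (b × c × a) ℂ) :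
    margCA (z • ρ) = z • margCA ρ := by
  ext ⟨y, s⟩ ⟨y', s'⟩
  simp [margCA, Finset.mul_sum]

lemma margA_smul (z : ℂ) (ρ : Matrix (b × c × a) (b × c × a) ℂ) :
    margA (z • ρ) = z • margA ρ := by
  ext s t
  simp [margA, Finset.mul_sum]

lemma trace_mul_liftB (ρ : Matrix (b × c × a) (b × c × a) ℂ) (G : Matrix (b × a) (b × a) ℂ) :
    (ρ * liftB (c := c) G).trace = (margBA ρ * G).trace := by
  simp only [Matrix.trace, Matrix.diag, Matrix.mul_apply, margBA, liftB, Matrix.of_apply,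
    Finset.sum_mul, Fintype.sum_prod_type, ite_mul, mul_ite, zero_mul, mul_zero,
    Finset.sum_ite_irrel, Finset.sum_const_zero, Finset.sum_ite_eq, Finset.sum_ite_eq',
    Finset.mem_univ, ite_true]
  refine Finset.sum_congr rfl fun x _ => ?_
  refine (Finset.sum_comm).trans (Finset.sum_congr rfl fun s _ => ?_)
  refine (Finset.sum_comm).trans (Finset.sum_congr rfl fun x' _ => ?_)
  exact Finset.sum_comm

lemma trace_mul_liftC (ρ : Matrix (b × c × a) (b × c × a) ℂ) (G : Matrix (c × a) (c × a) ℂ) :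
    (ρ * liftC (b := b) G).trace = (margCA ρ * G).trace := by
  simp only [Matrix.trace, Matrix.diag, Matrix.mul_apply, margCA, liftC, Matrix.of_apply,
    Finset.sum_mul, Fintype.sum_prod_type, ite_mul, mul_ite, zero_mul, mul_zero,
    Finset.sum_ite_irrel, Finset.sum_const_zero, Finset.sum_ite_eq, Finset.sum_ite_eq',
    Finset.mem_univ, ite_true]
  refine (Finset.sum_comm).trans (Finset.sum_congr rfl fun y _ => ?_)
  refine (Finset.sum_comm).trans (Finset.sum_congr rfl fun s _ => ?_)
  refine (Finset.sum_comm).trans (Finset.sum_congr rfl fun y' _ => ?_)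
  exact Finset.sum_comm

lemma trace_margA (ρ : Matrix (b × c × a) (b × c × a) ℂ) :
    (margA ρ).trace = ρ.trace := by
  simp only [Matrix.trace, Matrix.diag, margA, Matrix.of_apply, Fintype.sum_prod_type]
  calc ∑ s : a, ∑ x : b, ∑ y : c, ρ (x, y, s) (x, y, s)
      = ∑ x : b, ∑ s : a, ∑ y : c, ρ (x, y, s) (x, y, s) := Finset.sum_comm
    _ = ∑ x : b, ∑ y : c, ∑ s : a, ρ (x, y, s) (x, y, s) :=
        Finset.sum_congr rfl fun x _ => Finset.sum_comm

lemma trace_margBA (ρ : Matrix (b × c × a) (b × c × a) ℂ) :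
    (margBA ρ).trace = ρ.trace := by
  simp only [Matrix.trace, Matrix.diag, margBA, Matrix.of_apply, Fintype.sum_prod_type]
  refine Finset.sum_congr rfl fun x _ => ?_
  rw [Finset.sum_comm]

lemma trace_margCA (ρ : Matrix (b × c × a) (b × c × a) ℂ) :
    (margCA ρ).trace = ρ.trace := by
  simp only [Matrix.trace, Matrix.diag, margCA, Matrix.of_apply, Fintype.sum_prod_type]
  calc ∑ y : c, ∑ s : a, ∑ x : b, ρ (x, y, s) (x, y, s)
      = ∑ y : c, ∑ x : b, ∑ s : a, ρ (x, y, s) (x, y, s) :=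
        Finset.sum_congr rfl fun y _ => Finset.sum_comm
    _ = ∑ x : b, ∑ y : c, ∑ s : a, ρ (x, y, s) (x, y, s) := Finset.sum_comm

end Lifts

end Stmt8Aux

/-- If the Choi operator of a channel from `A` to `B ⊗ C` factorizes as
`ρ_{BC|A} = ρ_{B|A} · ρ_{C|A}`, then the two marginal Choi operators commute and
the quantum conditional mutual information `I(B : C | A)` on the normalized
state `ρ̂ = ρ / d_A` vanishes. -/
theorem stmt8 (ρ : Matrix (b × c × a) (b × c × a) ℂ)
    (hpos : ρ.PosSemidef) (htr : margA ρ = 1)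
    (hfact : ρ = liftB (margBA ρ) * liftC (margCA ρ)) :
    liftB (margBA ρ) * liftC (margCA ρ) = liftC (margCA ρ) * liftB (margBA ρ) ∧
    cmi (((Fintype.card a : ℂ))⁻¹ • ρ) = 0 := by
  classical
  have hρH : ρ.IsHermitian := hpos.1
  have hM : (margBA ρ).IsHermitian := by
    unfold Matrix.IsHermitian
    rw [Stmt8Aux.margBA_conjTranspose, hρH]
  have hN : (margCA ρ).IsHermitian := by
    unfold Matrix.IsHermitian
    rw [Stmt8Aux.margCA_conjTranspose, hρH]
  have hXH : (liftB (c := c) (margBA ρ)).IsHermitian := by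
    unfold Matrix.IsHermitian
    rw [Stmt8Aux.liftB_conjTranspose, hM]
  have hYH : (liftC (b := b) (margCA ρ)).IsHermitian := by
    unfold Matrix.IsHermitian
    rw [Stmt8Aux.liftC_conjTranspose, hN]
  have hXYρ : liftB (c := c) (margBA ρ) * liftC (margCA ρ) = ρ := hfact.symm
  have hYX : liftC (b := b) (margCA ρ) * liftB (margBA ρ) = ρ := by
    have h1 := congrArg Matrix.conjTranspose hXYρ
    rwa [Matrix.conjTranspose_mul, hXH, hYH, hρH] at h1
  have hcommMat : liftB (c := c) (margBA ρ) * liftC (margCA ρ)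
      = liftC (margCA ρ) * liftB (margBA ρ) := hXYρ.trans hYX.symm
  refine ⟨hcommMat, ?_⟩
  rcases isEmpty_or_nonempty a with hE | hNe
  · rw [cmi, Stmt8Aux.vnEntropy_of_isEmpty, Stmt8Aux.vnEntropy_of_isEmpty,
      Stmt8Aux.vnEntropy_of_isEmpty, Stmt8Aux.vnEntropy_of_isEmpty]
    ring
  · obtain ⟨U, μ, ν, hXU, hYU⟩ := Stmt8Aux.simul_diag hXH hYH hcommMat
    set d : ℝ := (Fintype.card a : ℝ) with hd
    have hz : ((Fintype.card a : ℂ))⁻¹ = ((d⁻¹ : ℝ) : ℂ) := by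
      rw [hd]
      push_cast
      ring
    have hρU : ρ = (U : Matrix (b × c × a) (b × c × a) ℂ)
        * diagonal (fun i => ((μ i * ν i : ℝ) : ℂ))
        * star (U : Matrix (b × c × a) (b × c × a) ℂ) := by
      rw [← hXYρ, hXU, hYU, Stmt8Aux.conj_diag_mul]
      norm_cast
    -- entropies of the four (normalized) operators
    have hSρ : vnEntropy (((Fintype.card a : ℂ))⁻¹ • ρ)
        = ∑ i, Real.negMulLog (d⁻¹ * (μ i * ν i)) := by
      refine Stmt8Aux.vnEntropy_eq U (fun i => d⁻¹ * (μ i * ν i)) ?_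
      rw [hz, hρU, Stmt8Aux.smul_conj_diag]
    have hMspec : margBA ρ = (hM.eigenvectorUnitary : Matrix (b × a) (b × a) ℂ)
        * diagonal (fun j => ((hM.eigenvalues j : ℝ) : ℂ))
        * star (hM.eigenvectorUnitary : Matrix (b × a) (b × a) ℂ) := hM.spectral_theorem
    have hNspec : margCA ρ = (hN.eigenvectorUnitary : Matrix (c × a) (c × a) ℂ)
        * diagonal (fun j => ((hN.eigenvalues j : ℝ) : ℂ))
        * star (hN.eigenvectorUnitary : Matrix (c × a) (c × a) ℂ) := hN.spectral_theorem
    have hSM : vnEntropy (margBA (((Fintype.card a : ℂ))⁻¹ • ρ))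
        = ∑ j, Real.negMulLog (d⁻¹ * hM.eigenvalues j) := by
      refine Stmt8Aux.vnEntropy_eq hM.eigenvectorUnitary (fun j => d⁻¹ * hM.eigenvalues j) ?_
      calc margBA (((Fintype.card a : ℂ))⁻¹ • ρ) = ((d⁻¹ : ℝ) : ℂ) • margBA ρ := by
            rw [Stmt8Aux.margBA_smul, hz]
        _ = ((d⁻¹ : ℝ) : ℂ) • ((hM.eigenvectorUnitary : Matrix (b × a) (b × a) ℂ)
              * diagonal (fun j => ((hM.eigenvalues j : ℝ) : ℂ))
              * star (hM.eigenvectorUnitary : Matrix (b × a) (b × a) ℂ)) :=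
            congrArg (fun Z => ((d⁻¹ : ℝ) : ℂ) • Z) hMspec
        _ = _ := Stmt8Aux.smul_conj_diag _ _ _
    have hSN : vnEntropy (margCA (((Fintype.card a : ℂ))⁻¹ • ρ))
        = ∑ j, Real.negMulLog (d⁻¹ * hN.eigenvalues j) := by
      refine Stmt8Aux.vnEntropy_eq hN.eigenvectorUnitary (fun j => d⁻¹ * hN.eigenvalues j) ?_
      calc margCA (((Fintype.card a : ℂ))⁻¹ • ρ) = ((d⁻¹ : ℝ) : ℂ) • margCA ρ := by
            rw [Stmt8Aux.margCA_smul, hz]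
        _ = ((d⁻¹ : ℝ) : ℂ) • ((hN.eigenvectorUnitary : Matrix (c × a) (c × a) ℂ)
              * diagonal (fun j => ((hN.eigenvalues j : ℝ) : ℂ))
              * star (hN.eigenvectorUnitary : Matrix (c × a) (c × a) ℂ)) :=
            congrArg (fun Z => ((d⁻¹ : ℝ) : ℂ) • Z) hNspec
        _ = _ := Stmt8Aux.smul_conj_diag _ _ _
    have hone : (1 : Matrix a a ℂ) = ((1 : Matrix.unitaryGroup a ℂ) : Matrix a a ℂ)
        * diagonal (fun _ : a => ((1 : ℝ) : ℂ))
        * star ((1 : Matrix.unitaryGroup a ℂ) : Matrix a a ℂ) := by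
      simp
    have hSA : vnEntropy (margA (((Fintype.card a : ℂ))⁻¹ • ρ))
        = ∑ _j : a, Real.negMulLog (d⁻¹ * 1) := by
      refine Stmt8Aux.vnEntropy_eq (1 : Matrix.unitaryGroup a ℂ) (fun _ => d⁻¹ * 1) ?_
      rw [Stmt8Aux.margA_smul, htr, hz, hone, Stmt8Aux.smul_conj_diag]
    -- trace identities
    have t1c : (∑ i, ((μ i * ν i : ℝ) : ℂ)) = (Fintype.card a : ℂ) := by
      have h1 : ρ.trace = ∑ i, ((μ i * ν i : ℝ) : ℂ) := by
        rw [hρU]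
        exact Stmt8Aux.trace_conj_diag U _
      have h2 : ρ.trace = (Fintype.card a : ℂ) := by
        rw [← Stmt8Aux.trace_margA, htr, Matrix.trace_one]
      rw [← h1, h2]
    have t1 : ∑ i, μ i * ν i = d := by
      have := t1c
      rw [← Complex.ofReal_sum] at this
      rw [hd]
      exact_mod_cast this
    have t2 : ∑ j, hM.eigenvalues j = d := by
      have h1 : (margBA ρ).trace = ∑ j, ((hM.eigenvalues j : ℝ) : ℂ) := by
        have := congrArg Matrix.trace hMspec
        rw [Stmt8Aux.trace_conj_diag] at this
        exact this
      have h2 : (margBA ρ).trace = (Fintype.card a : ℂ) := by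
        rw [Stmt8Aux.trace_margBA, ← Stmt8Aux.trace_margA, htr, Matrix.trace_one]
      have := h1.symm.trans h2
      rw [← Complex.ofReal_sum] at this
      rw [hd]
      exact_mod_cast this
    have t3 : ∑ j, hN.eigenvalues j = d := by
      have h1 : (margCA ρ).trace = ∑ j, ((hN.eigenvalues j : ℝ) : ℂ) := by
        have := congrArg Matrix.trace hNspec
        rw [Stmt8Aux.trace_conj_diag] at this
        exact this
      have h2 : (margCA ρ).trace = (Fintype.card a : ℂ) := by
        rw [Stmt8Aux.trace_margCA, ← Stmt8Aux.trace_margA, htr, Matrix.trace_one]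
      have := h1.symm.trans h2
      rw [← Complex.ofReal_sum] at this
      rw [hd]
      exact_mod_cast this
    have t4 : ∑ i, (μ i * ν i) * Real.log (μ i)
        = ∑ j, hM.eigenvalues j * Real.log (hM.eigenvalues j) := by
      refine Stmt8Aux.sum_mul_log U (fun i => μ i * ν i) μ hM.eigenvectorUnitary hM.eigenvalues
        ρ (liftB (margBA ρ)) (margBA ρ) Stmt8Aux.liftBAlgHom hρU hXU hMspec rfl ?_
      intro G
      exact Stmt8Aux.trace_mul_liftB ρ G
    have t5 : ∑ i, (μ i * ν i) * Real.log (ν i)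
        = ∑ j, hN.eigenvalues j * Real.log (hN.eigenvalues j) := by
      refine Stmt8Aux.sum_mul_log U (fun i => μ i * ν i) ν hN.eigenvectorUnitary hN.eigenvalues
        ρ (liftC (margCA ρ)) (margCA ρ) Stmt8Aux.liftCAlgHom hρU hYU hNspec rfl ?_
      intro G
      exact Stmt8Aux.trace_mul_liftC ρ G
    -- final arithmetic
    have hlam : ∑ i, Real.negMulLog (μ i * ν i)
        = (∑ j, Real.negMulLog (hM.eigenvalues j)) + ∑ j, Real.negMulLog (hN.eigenvalues j) := by
      have hterm : ∀ i : b × c × a, Real.negMulLog (μ i * ν i)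
          = -((μ i * ν i) * Real.log (μ i)) + -((μ i * ν i) * Real.log (ν i)) := by
        intro i
        rw [Real.negMulLog_mul]
        unfold Real.negMulLog
        ring
      calc ∑ i, Real.negMulLog (μ i * ν i)
          = ∑ i, (-((μ i * ν i) * Real.log (μ i)) + -((μ i * ν i) * Real.log (ν i))) :=
            Finset.sum_congr rfl fun i _ => hterm i
        _ = (-∑ i, (μ i * ν i) * Real.log (μ i)) + (-∑ i, (μ i * ν i) * Real.log (ν i)) := by
            rw [Finset.sum_add_distrib, Finset.sum_neg_distrib, Finset.sum_neg_distrib]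
        _ = _ := by
            rw [t4, t5, Stmt8Aux.sum_negMulLog_neg hM.eigenvalues,
              Stmt8Aux.sum_negMulLog_neg hN.eigenvalues]
    have hconst : (∑ _j : a, Real.negMulLog (d⁻¹ * 1)) = d * Real.negMulLog d⁻¹ := by
      rw [Finset.sum_const, Finset.card_univ, nsmul_eq_mul, mul_one, hd]
    have e1 := Stmt8Aux.sum_negMulLog_smul d⁻¹ hM.eigenvalues
    have e2 := Stmt8Aux.sum_negMulLog_smul d⁻¹ hN.eigenvalues
    have e3 := Stmt8Aux.sum_negMulLog_smul d⁻¹ (fun i : b × c × a => μ i * ν i)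
    rw [cmi, hSρ, hSM, hSN, hSA, hconst, e1, e2, t2, t3]
    rw [e3, t1, hlam]
    ring

end
end

section
/- Let 𝓗_A = ⊕ᵢ (𝓗_{Aᵢᴸ} ⊗ 𝓗_{Aᵢᴿ}) be a finite orthogonal direct-sum decomposition of a finite-dimensional Hilbert space, and suppose ρ_{BC|A} = Σᵢ (ρ_{B|Aᵢᴸ} ⊗ ρ_{C|Aᵢᴿ}), where each ρ_{B|Aᵢᴸ} is a positive operator on 𝓗_B ⊗ 𝓗_{Aᵢᴸ}* with Tr_B ρ_{B|Aᵢᴸ} = 𝟙 and similarly for ρ_{C|Aᵢᴿ}. Then the marginals ρ_{B|A} := Tr_C ρ_{BC|A} and ρ_{C|A} := Tr_B ρ_{BC|A} commute and satisfy ρ_{B|A}·ρ_{C|A} = ρ_{BC|A}. -/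
open Matrix
open scoped ComplexOrder

noncomputable section

variable {b c a : Type*} [Fintype b] [DecidableEq b] [Fintype c] [DecidableEq c]
  [Fintype a] [DecidableEq a]

/-- Transport along an equality of indices of the direct-sum decomposition. -/
def castLR {ι : Type*} (L R : ι → Type*) {i j : ι} (h : i = j) (v : L i × R i) :
    L j × R j := h ▸ v

/-- Direction (4) ⇒ (2) of the quantum conditional independence theorem:
if `ρ_{BC|A}` is block diagonal with respect to a direct-sum decomposition
`𝓗_A = ⊕ᵢ 𝓗_{Aᵢᴸ} ⊗ 𝓗_{Aᵢᴿ}` (encoded by the equivalence `e`), with the block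
for subspace `i` of the product form `ρ_{B|Aᵢᴸ} ⊗ ρ_{C|Aᵢᴿ}` for channels
`ρ_{B|Aᵢᴸ}`, `ρ_{C|Aᵢᴿ}`, then the marginals `ρ_{B|A}` and `ρ_{C|A}` commute
and their product is `ρ_{BC|A}`. -/
theorem stmt9 {ι : Type*} [Fintype ι] [DecidableEq ι]
    (L R : ι → Type*) [∀ i, Fintype (L i)] [∀ i, DecidableEq (L i)]
    [∀ i, Fintype (R i)] [∀ i, DecidableEq (R i)]
    (e : a ≃ Σ i : ι, L i × R i)
    (ρB : ∀ i, Matrix (b × L i) (b × L i) ℂ)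
    (ρC : ∀ i, Matrix (c × R i) (c × R i) ℂ)
    (hBpos : ∀ i, (ρB i).PosSemidef)
    (hCpos : ∀ i, (ρC i).PosSemidef)
    (hBtr : ∀ i, (Matrix.of fun l l' : L i => ∑ x : b, ρB i (x, l) (x, l')) = 1)
    (hCtr : ∀ i, (Matrix.of fun r r' : R i => ∑ y : c, ρC i (y, r) (y, r')) = 1)
    (ρ : Matrix (b × c × a) (b × c × a) ℂ)
    (hρ : ρ = Matrix.of fun p q =>
      if h : (e p.2.2).1 = (e q.2.2).1 then
        ρB (e q.2.2).1 (p.1, (castLR L R h (e p.2.2).2).1) (q.1, (e q.2.2).2.1) *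
        ρC (e q.2.2).1 (p.2.1, (castLR L R h (e p.2.2).2).2) (q.2.1, (e q.2.2).2.2)
      else 0) :
    liftB (margBA ρ) * liftC (margCA ρ) = liftC (margCA ρ) * liftB (margBA ρ) ∧
    liftB (margBA ρ) * liftC (margCA ρ) = ρ := by
  have castLR_rfl : ∀ (i : ι) (v : L i × R i), castLR L R rfl v = v := fun _ _ => rfl
  have hC1 : ∀ (i : ι) (r r' : R i),
      (∑ y : c, ρC i (y, r) (y, r')) = if r = r' then 1 else 0 := by
    intro i r r'
    have h := congrFun (congrFun (hCtr i) r) r'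
    simpa [Matrix.one_apply] using h
  have hB1 : ∀ (i : ι) (l l' : L i),
      (∑ x : b, ρB i (x, l) (x, l')) = if l = l' then 1 else 0 := by
    intro i l l'
    have h := congrFun (congrFun (hBtr i) l) l'
    simpa [Matrix.one_apply] using h
  have mB : ∀ (x x' : b) (α α' : a),
      margBA ρ (x, α) (x', α') =
        if h : (e α).1 = (e α').1 then
          (if (castLR L R h (e α).2).2 = (e α').2.2 then
            ρB (e α').1 (x, (castLR L R h (e α).2).1) (x', (e α').2.1) else 0)
        else 0 := by
    intro x x' α α'
    simp only [margBA, hρ, of_apply]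
    by_cases h : (e α).1 = (e α').1
    · simp only [dif_pos h]
      have hfac := Finset.mul_sum (Finset.univ : Finset c)
        (fun y => ρC (e α').1 (y, (castLR L R h (e α).2).2) (y, (e α').2.2))
        (ρB (e α').1 (x, (castLR L R h (e α).2).1) (x', (e α').2.1))
      rw [← hfac, hC1]
      simp [mul_ite]
    · simp [h]
  have mC : ∀ (y y' : c) (α α' : a),
      margCA ρ (y, α) (y', α') =
        if h : (e α).1 = (e α').1 then
          (if (castLR L R h (e α).2).1 = (e α').2.1 then
            ρC (e α').1 (y, (castLR L R h (e α).2).2) (y', (e α').2.2) else 0)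
        else 0 := by
    intro y y' α α'
    simp only [margCA, hρ, of_apply]
    by_cases h : (e α).1 = (e α').1
    · simp only [dif_pos h]
      have hfac := Finset.sum_mul (Finset.univ : Finset b)
        (fun x => ρB (e α').1 (x, (castLR L R h (e α).2).1) (x, (e α').2.1))
        (ρC (e α').1 (y, (castLR L R h (e α).2).2) (y', (e α').2.2))
      rw [← hfac, hB1]
      simp [ite_mul]
    · simp [h]
  have lBC : ∀ (M : Matrix (b × a) (b × a) ℂ) (N : Matrix (c × a) (c × a) ℂ)
      (x x' : b) (y y' : c) (α α' : a),
      ((liftB M * liftC N : Matrix (b × c × a) (b × c × a) ℂ)) (x, y, α) (x', y', α') =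
        ∑ β : a, M (x, α) (x', β) * N (y, β) (y', α') := by
    intro M N x x' y y' α α'
    rw [Matrix.mul_apply, Fintype.sum_prod_type]
    simp [liftB, liftC, Fintype.sum_prod_type, ite_mul, mul_ite,
      Finset.sum_ite_eq, Finset.sum_ite_eq']
  have lCB : ∀ (M : Matrix (b × a) (b × a) ℂ) (N : Matrix (c × a) (c × a) ℂ)
      (x x' : b) (y y' : c) (α α' : a),
      ((liftC N * liftB M : Matrix (b × c × a) (b × c × a) ℂ)) (x, y, α) (x', y', α') =
        ∑ β : a, N (y, α) (y', β) * M (x, β) (x', α') := by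
    intro M N x x' y y' α α'
    rw [Matrix.mul_apply, Fintype.sum_prod_type]
    simp [liftB, liftC, Fintype.sum_prod_type, ite_mul, mul_ite,
      Finset.sum_ite_eq, Finset.sum_ite_eq']
  have mB2 : ∀ (x x' : b) (i j : ι) (p : L i × R i) (p' : L j × R j),
      margBA ρ (x, e.symm ⟨i, p⟩) (x', e.symm ⟨j, p'⟩) =
        if h : i = j then
          (if (castLR L R h p).2 = p'.2 then ρB j (x, (castLR L R h p).1) (x', p'.1) else 0)
        else 0 := by
    intro x x' i j p p'
    rw [mB]
    generalize hs : e (e.symm ⟨i, p⟩) = s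
    rw [Equiv.apply_symm_apply] at hs
    subst hs
    generalize hs' : e (e.symm ⟨j, p'⟩) = s'
    rw [Equiv.apply_symm_apply] at hs'
    subst hs'
    rfl
  have mC2 : ∀ (y y' : c) (i j : ι) (p : L i × R i) (p' : L j × R j),
      margCA ρ (y, e.symm ⟨i, p⟩) (y', e.symm ⟨j, p'⟩) =
        if h : i = j then
          (if (castLR L R h p).1 = p'.1 then ρC j (y, (castLR L R h p).2) (y', p'.2) else 0)
        else 0 := by
    intro y y' i j p p'
    rw [mC]
    generalize hs : e (e.symm ⟨i, p⟩) = s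
    rw [Equiv.apply_symm_apply] at hs
    subst hs
    generalize hs' : e (e.symm ⟨j, p'⟩) = s'
    rw [Equiv.apply_symm_apply] at hs'
    subst hs'
    rfl
  have rho2 : ∀ (x x' : b) (y y' : c) (i j : ι) (p : L i × R i) (p' : L j × R j),
      ρ (x, y, e.symm ⟨i, p⟩) (x', y', e.symm ⟨j, p'⟩) =
        if h : i = j then
          ρB j (x, (castLR L R h p).1) (x', p'.1) * ρC j (y, (castLR L R h p).2) (y', p'.2)
        else 0 := by
    intro x x' y y' i j p p'
    rw [hρ]
    simp only [of_apply]
    generalize hs : e (e.symm ⟨i, p⟩) = s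
    rw [Equiv.apply_symm_apply] at hs
    subst hs
    generalize hs' : e (e.symm ⟨j, p'⟩) = s'
    rw [Equiv.apply_symm_apply] at hs'
    subst hs'
    rfl
  have core1 : ∀ (x x' : b) (y y' : c) (α α' : a),
      (∑ β : a, margBA ρ (x, α) (x', β) * margCA ρ (y, β) (y', α')) =
        ρ (x, y, α) (x', y', α') := by
    intro x x' y y' α α'
    obtain ⟨s1, rfl⟩ : ∃ s, α = e.symm s := ⟨e α, (e.symm_apply_apply α).symm⟩
    obtain ⟨s2, rfl⟩ : ∃ s, α' = e.symm s := ⟨e α', (e.symm_apply_apply α').symm⟩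
    obtain ⟨i1, p1⟩ := s1
    obtain ⟨i2, p2⟩ := s2
    rw [rho2]
    rw [← Equiv.sum_comp e.symm (fun β => margBA ρ (x, e.symm ⟨i1, p1⟩) (x', β) *
      margCA ρ (y, β) (y', e.symm ⟨i2, p2⟩))]
    rw [← Finset.univ_sigma_univ, Finset.sum_sigma]
    simp only [mB2, mC2]
    by_cases h12 : i1 = i2
    · subst h12
      rw [dif_pos rfl, Finset.sum_eq_single i1]
      · simp [castLR_rfl, Fintype.sum_prod_type, ite_mul, mul_ite,
          Finset.sum_ite_eq, Finset.sum_ite_eq']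
      · intro i _ hne
        apply Finset.sum_eq_zero
        intro p _
        rw [dif_neg (Ne.symm hne), zero_mul]
      · intro h
        exact absurd (Finset.mem_univ i1) h
    · rw [dif_neg h12]
      apply Finset.sum_eq_zero
      intro i _
      apply Finset.sum_eq_zero
      intro p _
      by_cases h : i1 = i
      · subst h
        rw [dif_neg h12, mul_zero]
      · rw [dif_neg h, zero_mul]
  have core2 : ∀ (x x' : b) (y y' : c) (α α' : a),
      (∑ β : a, margCA ρ (y, α) (y', β) * margBA ρ (x, β) (x', α')) =
        ρ (x, y, α) (x', y', α') := by
    intro x x' y y' α α'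
    obtain ⟨s1, rfl⟩ : ∃ s, α = e.symm s := ⟨e α, (e.symm_apply_apply α).symm⟩
    obtain ⟨s2, rfl⟩ : ∃ s, α' = e.symm s := ⟨e α', (e.symm_apply_apply α').symm⟩
    obtain ⟨i1, p1⟩ := s1
    obtain ⟨i2, p2⟩ := s2
    rw [rho2]
    rw [← Equiv.sum_comp e.symm (fun β => margCA ρ (y, e.symm ⟨i1, p1⟩) (y', β) *
      margBA ρ (x, β) (x', e.symm ⟨i2, p2⟩))]
    rw [← Finset.univ_sigma_univ, Finset.sum_sigma]
    simp only [mB2, mC2]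
    by_cases h12 : i1 = i2
    · subst h12
      rw [dif_pos rfl, Finset.sum_eq_single i1]
      · simp [castLR_rfl, Fintype.sum_prod_type, ite_mul, mul_ite,
          Finset.sum_ite_eq, Finset.sum_ite_eq', mul_comm]
      · intro i _ hne
        apply Finset.sum_eq_zero
        intro p _
        rw [dif_neg (Ne.symm hne), zero_mul]
      · intro h
        exact absurd (Finset.mem_univ i1) h
    · rw [dif_neg h12]
      apply Finset.sum_eq_zero
      intro i _
      apply Finset.sum_eq_zero
      intro p _
      by_cases h : i1 = i
      · subst h
        rw [dif_neg h12, mul_zero]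
      · rw [dif_neg h, zero_mul]
  have key1 : liftB (margBA ρ) * liftC (margCA ρ) = ρ := by
    ext ⟨x, y, α⟩ ⟨x', y', α'⟩
    rw [lBC, core1]
  have key2 : liftC (margCA ρ) * liftB (margBA ρ) = ρ := by
    ext ⟨x, y, α⟩ ⟨x', y', α'⟩
    rw [lCB, core2]
  exact ⟨key1.trans key2.symm, key1⟩

end
end

section
/- Let U be a unitary on 𝓗_B ⊗ 𝓗_F ⊗ 𝓗_C ≅ 𝓗_{L_B} ⊗ 𝓗_A ⊗ 𝓗_{L_C} (all finite-dimensional), and let ρ̂ᵘ be the normalized Choi-Jamiołkowski state of U on (𝓗_B ⊗ 𝓗_F ⊗ 𝓗_C) ⊗ (𝓗_{L_B} ⊗ 𝓗_A ⊗ 𝓗_{L_C})*, i.e. ρ̂ᵘ = (1/(d_{L_B} d_A d_{L_C})) Σ |U e_i⟩⟨U e_j| ⊗ |e_i⟩⟨e_j|. Then I(B : FC | L_B A L_C) = 0 and I(L_B : L_C | A) = 0 when evaluated on ρ̂ᵘ. -/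
open Matrix

noncomputable section

lemma trace_eq_sum_eig {n : Type*} [Fintype n] [DecidableEq n]
    {A : Matrix n n ℂ} (hA : A.IsHermitian) :
    A.trace = ∑ i, (hA.eigenvalues i : ℂ) := by
  exact hA.trace_eq_sum_eigenvalues

lemma eig_dichotomy {n : Type*} [Fintype n] [DecidableEq n]
    {A : Matrix n n ℂ} (hA : A.IsHermitian) (c : ℝ)
    (h : A * A = ((c : ℂ)) • A) (i : n) :
    hA.eigenvalues i = 0 ∨ hA.eigenvalues i = c := by
  set v := ⇑(hA.eigenvectorBasis i) with hv
  set lam := hA.eigenvalues i with hlam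
  have hmv : A *ᵥ v = lam • v := hA.mulVec_eigenvectorBasis i
  have h2 : (A * A) *ᵥ v = (lam * lam) • v := by
    rw [← Matrix.mulVec_mulVec, hmv, Matrix.mulVec_smul, hmv, smul_smul]
  have h3 : (A * A) *ᵥ v = (c * lam) • v := by
    rw [h, Matrix.smul_mulVec, hmv]
    funext j
    simp only [Pi.smul_apply, Complex.real_smul, smul_eq_mul]
    push_cast
    ring
  have hvne : v ≠ 0 := by
    intro h0
    have : hA.eigenvectorBasis i = 0 := by
      apply PiLp.ext; intro j
      exact congrFun h0 j
    exact hA.eigenvectorBasis.orthonormal.ne_zero i this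
  have : (lam * lam) • v = (c * lam) • v := h2 ▸ h3
  have heq : lam * lam = c * lam := by
    by_contra hne
    have := sub_smul (lam*lam) (c*lam) v ▸ (sub_eq_zero.mpr this)
    rcases smul_eq_zero.mp this with h' | h'
    · exact hne (sub_eq_zero.mp h')
    · exact hvne h'
  rcases mul_eq_mul_right_iff.mp (by linarith [heq] : lam * lam = c * lam) with h' | h'
  · right; exact h'
  · left; exact h'

lemma vnEntropy_of_sq {n : Type*} [Fintype n] [DecidableEq n]
    {A : Matrix n n ℂ} (hA : A.IsHermitian) (c : ℝ)
    (h : A * A = ((c : ℂ)) • A) :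
    vnEntropy A = A.trace.re * (-Real.log c) := by
  rw [vnEntropy, dif_pos hA]
  have ht : A.trace.re = ∑ i, hA.eigenvalues i := by
    rw [trace_eq_sum_eig hA]
    rw [Complex.re_sum]
    norm_num
  rw [ht, Finset.sum_mul]
  refine Finset.sum_congr rfl fun i _ => ?_
  rcases eig_dichotomy hA c h i with h' | h' <;> rw [h']
  · simp [Real.negMulLog_zero]
  · rw [Real.negMulLog]; ring


lemma gram_herm {n ι : Type*} [Fintype n] [DecidableEq n] [Fintype ι]
    (v : n → ι → ℂ) (κ : ℝ) (S : Matrix n n ℂ)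
    (hS : ∀ p q, S p q = (κ : ℂ) * ∑ i, v p i * star (v q i)) :
    S.IsHermitian := by
  refine Matrix.IsHermitian.ext fun p q => ?_
  rw [hS, hS, star_mul']
  simp only [star_sum, star_mul', star_star, Complex.star_def, Complex.conj_ofReal,
    Complex.conj_conj, RingHomCompTriple.comp_apply, RingHom.id_apply]
  congr 1
  exact Finset.sum_congr rfl fun i _ => by ring

lemma gram_sq {n ι : Type*} [Fintype n] [DecidableEq n] [Fintype ι] [DecidableEq ι]
    (v : n → ι → ℂ) (g κ : ℝ)
    (hg : ∀ i j, ∑ p, star (v p i) * v p j = if i = j then (g : ℂ) else 0)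
    (S : Matrix n n ℂ)
    (hS : ∀ p q, S p q = (κ : ℂ) * ∑ i, v p i * star (v q i)) :
    S * S = ((κ * g : ℝ) : ℂ) • S := by
  ext p q
  rw [Matrix.mul_apply, Matrix.smul_apply]
  have step1 : ∀ r, S p r * S r q
      = (κ:ℂ) * (κ:ℂ) * ∑ i, ∑ j, (v p i * star (v q j)) * (star (v r i) * v r j) := by
    intro r
    rw [hS, hS, mul_mul_mul_comm, Finset.sum_mul_sum]
    congr 1
    refine Finset.sum_congr rfl fun i _ => Finset.sum_congr rfl fun j _ => by ring
  calc ∑ r, S p r * S r q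
      = (κ:ℂ) * (κ:ℂ) * ∑ r, ∑ i, ∑ j, (v p i * star (v q j)) * (star (v r i) * v r j) := by
        rw [Finset.mul_sum]; exact Finset.sum_congr rfl fun r _ => step1 r
    _ = (κ:ℂ) * (κ:ℂ) * ∑ i, ∑ j, (v p i * star (v q j)) * ∑ r, (star (v r i) * v r j) := by
        congr 1
        rw [Finset.sum_comm]
        refine Finset.sum_congr rfl fun i _ => ?_
        rw [Finset.sum_comm]
        refine Finset.sum_congr rfl fun j _ => ?_
        rw [Finset.mul_sum]
    _ = (κ:ℂ) * (κ:ℂ) * ∑ i, (v p i * star (v q i)) * (g:ℂ) := by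
        congr 1
        refine Finset.sum_congr rfl fun i _ => ?_
        rw [Finset.sum_congr rfl fun j _ => by rw [hg i j]]
        simp [Finset.sum_ite_eq, mul_ite]
    _ = ((κ * g : ℝ) : ℂ) * S p q := by
        rw [hS]
        push_cast
        rw [← Finset.sum_mul]
        ring

lemma gram_trace {n ι : Type*} [Fintype n] [DecidableEq n] [Fintype ι] [DecidableEq ι]
    (v : n → ι → ℂ) (g κ : ℝ)
    (hg : ∀ i j, ∑ p, star (v p i) * v p j = if i = j then (g : ℂ) else 0)
    (S : Matrix n n ℂ)
    (hS : ∀ p q, S p q = (κ : ℂ) * ∑ i, v p i * star (v q i)) :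
    S.trace = ((κ * g * Fintype.card ι : ℝ) : ℂ) := by
  rw [Matrix.trace]
  simp only [Matrix.diag_apply, hS]
  rw [← Finset.mul_sum, Finset.sum_comm]
  have : ∀ i : ι, ∑ p, v p i * star (v p i) = (g : ℂ) := by
    intro i
    have h0 := hg i i
    simp only [eq_self_iff_true, if_true] at h0
    rw [← h0]
    exact Finset.sum_congr rfl fun p _ => by ring
  rw [Finset.sum_congr rfl fun i _ => this i]
  simp [Finset.sum_const, mul_comm]
  push_cast
  ring

lemma vnEntropy_gram {n ι : Type*} [Fintype n] [DecidableEq n] [Fintype ι] [DecidableEq ι]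
    (v : n → ι → ℂ) (g κ : ℝ)
    (hg : ∀ i j, ∑ p, star (v p i) * v p j = if i = j then (g : ℂ) else 0)
    (S : Matrix n n ℂ)
    (hS : ∀ p q, S p q = (κ : ℂ) * ∑ i, v p i * star (v q i)) :
    vnEntropy S = (κ * g * Fintype.card ι) * (-Real.log (κ * g)) := by
  have hH := gram_herm v κ S hS
  have hsq := gram_sq v g κ hg S hS
  rw [vnEntropy_of_sq hH (κ * g) (by exact_mod_cast hsq)]
  rw [gram_trace v g κ hg S hS]
  norm_num

lemma vnEntropy_smul_one {n : Type*} [Fintype n] [DecidableEq n]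
    (c : ℝ) (S : Matrix n n ℂ) (hS : S = ((c : ℂ)) • 1) :
    vnEntropy S = (c * Fintype.card n) * (-Real.log c) := by
  have hH : S.IsHermitian := by
    rw [hS]
    simp [Matrix.IsHermitian, Matrix.conjTranspose_smul, Complex.star_def, Complex.conj_ofReal]
  have hsq : S * S = ((c : ℂ)) • S := by
    rw [hS, smul_mul_smul_comm, smul_smul, one_mul]
  rw [vnEntropy_of_sq hH c hsq, hS, Matrix.trace_smul, Matrix.trace_one, smul_eq_mul]
  have : ((c:ℂ) * (Fintype.card n : ℂ)) = (((c * Fintype.card n : ℝ)):ℂ) := by push_cast; ring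
  rw [this, Complex.ofReal_re]

lemma star_sum_trick {α : Type*} [Fintype α] (f g : α → ℂ) :
    ∑ s, star (f s) * g s = star (∑ s, f s * star (g s)) := by
  rw [star_sum]
  exact Finset.sum_congr rfl fun s _ => by rw [star_mul', star_star]

lemma star_ite_delta (P : Prop) [Decidable P] :
    star (if P then (1:ℂ) else 0) = if P then 1 else 0 := by
  split <;> simp


set_option maxHeartbeats 2000000 in
/-- For a unitary `U` from `𝓗_{L_B} ⊗ 𝓗_A ⊗ 𝓗_{L_C}` to `𝓗_B ⊗ 𝓗_F ⊗ 𝓗_C`, the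
normalized Choi–Jamiołkowski state `ρ̂ᵘ` satisfies `I(B : FC | L_B A L_C) = 0` and
`I(L_B : L_C | A) = 0`, where the conditional mutual informations are computed via
von Neumann entropies of the indicated marginals (partial traces) of `ρ̂ᵘ`. -/
theorem stmt12 {bb ff cc lb aa lc : Type*}
    [Fintype bb] [DecidableEq bb] [Fintype ff] [DecidableEq ff]
    [Fintype cc] [DecidableEq cc] [Fintype lb] [DecidableEq lb]
    [Fintype aa] [DecidableEq aa] [Fintype lc] [DecidableEq lc]
    (U : Matrix (bb × ff × cc) (lb × aa × lc) ℂ)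
    (hU₁ : U * Uᴴ = 1) (hU₂ : Uᴴ * U = 1)
    (ρ : Matrix ((bb × ff × cc) × (lb × aa × lc)) ((bb × ff × cc) × (lb × aa × lc)) ℂ)
    (hρ : ρ = ((Fintype.card lb * Fintype.card aa * Fintype.card lc : ℂ))⁻¹ •
      Matrix.of fun p q => U p.1 p.2 * star (U q.1 q.2)) :
    -- marginals of ρ̂ᵘ
    (let ρ_B_in : Matrix (bb × (lb × aa × lc)) (bb × (lb × aa × lc)) ℂ :=
      Matrix.of fun p q => ∑ yf : ff, ∑ yc : cc, ρ ((p.1, yf, yc), p.2) ((q.1, yf, yc), q.2);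
    let ρ_FC_in : Matrix ((ff × cc) × (lb × aa × lc)) ((ff × cc) × (lb × aa × lc)) ℂ :=
      Matrix.of fun p q =>
        ∑ xb : bb, ρ ((xb, p.1.1, p.1.2), p.2) ((xb, q.1.1, q.1.2), q.2);
    let ρ_in : Matrix (lb × aa × lc) (lb × aa × lc) ℂ :=
      Matrix.of fun s t => ∑ o : bb × ff × cc, ρ (o, s) (o, t);
    let ρ_LB_A : Matrix (lb × aa) (lb × aa) ℂ :=
      Matrix.of fun p q =>
        ∑ o : bb × ff × cc, ∑ m : lc, ρ (o, (p.1, p.2, m)) (o, (q.1, q.2, m));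
    let ρ_A_LC : Matrix (aa × lc) (aa × lc) ℂ :=
      Matrix.of fun p q =>
        ∑ o : bb × ff × cc, ∑ l : lb, ρ (o, (l, p.1, p.2)) (o, (l, q.1, q.2));
    let ρ_A : Matrix aa aa ℂ :=
      Matrix.of fun s t =>
        ∑ o : bb × ff × cc, ∑ l : lb, ∑ m : lc, ρ (o, (l, s, m)) (o, (l, t, m));
    -- I(B : FC | L_B A L_C) = 0
    vnEntropy ρ_B_in + vnEntropy ρ_FC_in - vnEntropy ρ - vnEntropy ρ_in = 0 ∧
    -- I(L_B : L_C | A) = 0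
    vnEntropy ρ_LB_A + vnEntropy ρ_A_LC - vnEntropy ρ_in - vnEntropy ρ_A = 0) := by
  intro ρ_B_in ρ_FC_in ρ_in ρ_LB_A ρ_A_LC ρ_A
  -- entrywise unitarity
  have h1 : ∀ x y : bb × ff × cc, ∑ s, U x s * star (U y s) = if x = y then 1 else 0 := by
    intro x y
    have h := congrFun (congrFun hU₁ x) y
    simpa [Matrix.mul_apply, Matrix.one_apply, Matrix.conjTranspose_apply] using h
  have h2 : ∀ s t : lb × aa × lc, ∑ x, U x s * star (U x t) = if s = t then 1 else 0 := by
    intro s t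
    have h := congrFun (congrFun hU₂ s) t
    simp only [Matrix.mul_apply, Matrix.conjTranspose_apply, Matrix.one_apply] at h
    have h' := star_sum_trick (fun x => U x s) (fun x => U x t)
    rw [h] at h'
    rw [← star_star (∑ x, U x s * star (U x t)), ← h', star_ite_delta]
  -- card equality
  have hcard : Fintype.card (bb × ff × cc) = Fintype.card (lb × aa × lc) := by
    have t1 := congrArg Matrix.trace hU₁
    have t2 := congrArg Matrix.trace hU₂
    rw [Matrix.trace_mul_comm, t2, Matrix.trace_one, Matrix.trace_one] at t1
    exact_mod_cast t1.symm
  -- real card abbreviations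
  obtain ⟨DR, hDR⟩ : ∃ x : ℝ, x = ((Fintype.card lb * Fintype.card aa * Fintype.card lc : ℕ) : ℝ) := ⟨_, rfl⟩
  obtain ⟨CB, hCB⟩ : ∃ x : ℝ, x = ((Fintype.card bb : ℕ) : ℝ) := ⟨_, rfl⟩
  obtain ⟨CF, hCF⟩ : ∃ x : ℝ, x = ((Fintype.card ff : ℕ) : ℝ) := ⟨_, rfl⟩
  obtain ⟨CC, hCC⟩ : ∃ x : ℝ, x = ((Fintype.card cc : ℕ) : ℝ) := ⟨_, rfl⟩
  obtain ⟨CLB, hCLB⟩ : ∃ x : ℝ, x = ((Fintype.card lb : ℕ) : ℝ) := ⟨_, rfl⟩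
  obtain ⟨CAA, hCAA⟩ : ∃ x : ℝ, x = ((Fintype.card aa : ℕ) : ℝ) := ⟨_, rfl⟩
  obtain ⟨CLC, hCLC⟩ : ∃ x : ℝ, x = ((Fintype.card lc : ℕ) : ℝ) := ⟨_, rfl⟩
  have hprodIn : CLB * CAA * CLC = DR := by rw [hCLB, hCAA, hCLC, hDR]; push_cast; ring
  have hprodOut : CB * CF * CC = DR := by
    rw [hCB, hCF, hCC, hDR]
    have := congrArg (Nat.cast : ℕ → ℝ) hcard
    push_cast [Fintype.card_prod] at this ⊢
    linarith
  -- entrywise ρ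
  have hρ' : ∀ p q, ρ p q = ((DR⁻¹ : ℝ) : ℂ) * (U p.1 p.2 * star (U q.1 q.2)) := by
    intro p q
    rw [hρ, Matrix.smul_apply, Matrix.of_apply, smul_eq_mul]
    congr 1
    rw [hDR]
    push_cast
    ring
  ----------------------------------------------------------------
  -- entropy of ρ via gram with ι = Unit
  have hEρ : vnEntropy ρ = (DR⁻¹ * DR * (Fintype.card Unit)) * (-Real.log (DR⁻¹ * DR)) := by
    have hg : ∀ i j : Unit,
        ∑ p : (bb × ff × cc) × (lb × aa × lc), star (U p.1 p.2) * U p.1 p.2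
          = if i = j then ((DR : ℝ) : ℂ) else 0 := by
      intro i j
      rw [if_pos rfl, Fintype.sum_prod_type]
      have inner : ∀ x : bb × ff × cc, ∑ s, star (U x s) * U x s = 1 := by
        intro x
        rw [star_sum_trick, h1 x x, if_pos rfl, star_one]
      rw [Finset.sum_congr rfl fun x _ => inner x]
      simp [hDR, hcard]
      push_cast [Fintype.card_prod]
      ring
    have hS : ∀ p q, ρ p q
        = ((DR⁻¹ : ℝ) : ℂ) * ∑ _ : Unit, U p.1 p.2 * star (U q.1 q.2) := by
      intro p q
      rw [hρ' p q]
      simp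
    exact vnEntropy_gram (fun p _ => U p.1 p.2) DR DR⁻¹ hg ρ hS
  -- entropy of ρ_B_in via gram with ι = ff × cc
  have hEB : vnEntropy ρ_B_in
      = (DR⁻¹ * CB * (Fintype.card (ff × cc))) * (-Real.log (DR⁻¹ * CB)) := by
    have hg : ∀ i j : ff × cc,
        ∑ p : bb × (lb × aa × lc),
          star (U (p.1, i.1, i.2) p.2) * U (p.1, j.1, j.2) p.2
          = if i = j then ((CB : ℝ) : ℂ) else 0 := by
      intro i j
      rw [Fintype.sum_prod_type]
      have inner : ∀ b : bb, ∑ s, star (U (b, i.1, i.2) s) * U (b, j.1, j.2) s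
          = if i = j then (1:ℂ) else 0 := by
        intro b
        rw [star_sum_trick, h1 (b, i.1, i.2) (b, j.1, j.2)]
        have hcond : ((b, i.1, i.2) = (b, j.1, j.2)) ↔ i = j := by
          simp [Prod.ext_iff]
        rw [if_congr hcond rfl rfl, star_ite_delta]
      rw [Finset.sum_congr rfl fun b _ => inner b]
      by_cases hij : i = j
      · simp [hij, hCB]
      · simp [hij]
    have hS : ∀ p q, ρ_B_in p q
        = ((DR⁻¹ : ℝ) : ℂ) * ∑ i : ff × cc, U (p.1, i.1, i.2) p.2 * star (U (q.1, i.1, i.2) q.2) := by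
      intro p q
      show (∑ yf : ff, ∑ yc : cc, ρ ((p.1, yf, yc), p.2) ((q.1, yf, yc), q.2)) = _
      rw [Fintype.sum_prod_type, Finset.mul_sum]
      refine Finset.sum_congr rfl fun yf _ => ?_
      rw [Finset.mul_sum]
      exact Finset.sum_congr rfl fun yc _ => hρ' _ _
    exact vnEntropy_gram (fun p i => U (p.1, i.1, i.2) p.2) CB DR⁻¹ hg ρ_B_in hS
  -- entropy of ρ_FC_in via gram with ι = bb
  have hEFC : vnEntropy ρ_FC_in
      = (DR⁻¹ * (CF * CC) * (Fintype.card bb)) * (-Real.log (DR⁻¹ * (CF * CC))) := by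
    have hg : ∀ i j : bb,
        ∑ p : (ff × cc) × (lb × aa × lc),
          star (U (i, p.1.1, p.1.2) p.2) * U (j, p.1.1, p.1.2) p.2
          = if i = j then (((CF * CC : ℝ)) : ℂ) else 0 := by
      intro i j
      rw [Fintype.sum_prod_type]
      have inner : ∀ fc : ff × cc, ∑ s, star (U (i, fc.1, fc.2) s) * U (j, fc.1, fc.2) s
          = if i = j then (1:ℂ) else 0 := by
        intro fc
        rw [star_sum_trick, h1 (i, fc.1, fc.2) (j, fc.1, fc.2)]
        have hcond : ((i, fc.1, fc.2) = (j, fc.1, fc.2)) ↔ i = j := by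
          simp [Prod.ext_iff]
        rw [if_congr hcond rfl rfl, star_ite_delta]
      rw [Finset.sum_congr rfl fun fc _ => inner fc]
      by_cases hij : i = j
      · simp [hij, hCF, hCC]
      · simp [hij]
    have hS : ∀ p q, ρ_FC_in p q
        = ((DR⁻¹ : ℝ) : ℂ) * ∑ i : bb, U (i, p.1.1, p.1.2) p.2 * star (U (i, q.1.1, q.1.2) q.2) := by
      intro p q
      show (∑ xb : bb, ρ ((xb, p.1.1, p.1.2), p.2) ((xb, q.1.1, q.1.2), q.2)) = _
      rw [Finset.mul_sum]
      exact Finset.sum_congr rfl fun xb _ => hρ' _ _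
    exact vnEntropy_gram (fun p i => U (i, p.1.1, p.1.2) p.2) (CF * CC) DR⁻¹ hg ρ_FC_in hS
  ----------------------------------------------------------------
  -- scalar marginals
  have hEin : vnEntropy ρ_in
      = ((DR⁻¹) * (Fintype.card (lb × aa × lc))) * (-Real.log (DR⁻¹)) := by
    refine vnEntropy_smul_one DR⁻¹ ρ_in ?_
    ext s t
    show (∑ o : bb × ff × cc, ρ (o, s) (o, t)) = _
    simp only [hρ']
    rw [← Finset.mul_sum, h2 s t]
    simp [Matrix.smul_apply, Matrix.one_apply, mul_ite]
  have hELBA : vnEntropy ρ_LB_A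
      = ((DR⁻¹ * CLC) * (Fintype.card (lb × aa))) * (-Real.log (DR⁻¹ * CLC)) := by
    refine vnEntropy_smul_one (DR⁻¹ * CLC) ρ_LB_A ?_
    ext p q
    show (∑ o : bb × ff × cc, ∑ m : lc, ρ (o, (p.1, p.2, m)) (o, (q.1, q.2, m))) = _
    rw [Finset.sum_comm]
    have inner : ∀ m : lc, ∑ o : bb × ff × cc, ρ (o, (p.1, p.2, m)) (o, (q.1, q.2, m))
        = ((DR⁻¹ : ℝ) : ℂ) * (if p = q then 1 else 0) := by
      intro m
      simp only [hρ']
      rw [← Finset.mul_sum, h2 (p.1, p.2, m) (q.1, q.2, m)]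
      have hcond : ((p.1, p.2, m) = (q.1, q.2, m)) ↔ p = q := by simp [Prod.ext_iff]
      rw [if_congr hcond rfl rfl]
    rw [Finset.sum_congr rfl fun m _ => inner m]
    simp [Finset.sum_const, Matrix.smul_apply, Matrix.one_apply, hCLC, mul_ite]
    by_cases hpq : p = q <;> simp [hpq] <;> push_cast <;> ring
  have hEALC : vnEntropy ρ_A_LC
      = ((DR⁻¹ * CLB) * (Fintype.card (aa × lc))) * (-Real.log (DR⁻¹ * CLB)) := by
    refine vnEntropy_smul_one (DR⁻¹ * CLB) ρ_A_LC ?_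
    ext p q
    show (∑ o : bb × ff × cc, ∑ l : lb, ρ (o, (l, p.1, p.2)) (o, (l, q.1, q.2))) = _
    rw [Finset.sum_comm]
    have inner : ∀ l : lb, ∑ o : bb × ff × cc, ρ (o, (l, p.1, p.2)) (o, (l, q.1, q.2))
        = ((DR⁻¹ : ℝ) : ℂ) * (if p = q then 1 else 0) := by
      intro l
      simp only [hρ']
      rw [← Finset.mul_sum, h2 (l, p.1, p.2) (l, q.1, q.2)]
      have hcond : ((l, p.1, p.2) = (l, q.1, q.2)) ↔ p = q := by simp [Prod.ext_iff]
      rw [if_congr hcond rfl rfl]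
    rw [Finset.sum_congr rfl fun l _ => inner l]
    simp [Finset.sum_const, Matrix.smul_apply, Matrix.one_apply, hCLB, mul_ite]
    by_cases hpq : p = q <;> simp [hpq] <;> push_cast <;> ring
  have hEA : vnEntropy ρ_A
      = ((DR⁻¹ * (CLB * CLC)) * (Fintype.card aa)) * (-Real.log (DR⁻¹ * (CLB * CLC))) := by
    refine vnEntropy_smul_one (DR⁻¹ * (CLB * CLC)) ρ_A ?_
    ext s t
    show (∑ o : bb × ff × cc, ∑ l : lb, ∑ m : lc, ρ (o, (l, s, m)) (o, (l, t, m))) = _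
    rw [Finset.sum_comm]
    have inner : ∀ l : lb, ∑ o : bb × ff × cc, ∑ m : lc, ρ (o, (l, s, m)) (o, (l, t, m))
        = ((DR⁻¹ : ℝ) : ℂ) * (Fintype.card lc) * (if s = t then 1 else 0) := by
      intro l
      rw [Finset.sum_comm]
      have inner2 : ∀ m : lc, ∑ o : bb × ff × cc, ρ (o, (l, s, m)) (o, (l, t, m))
          = ((DR⁻¹ : ℝ) : ℂ) * (if s = t then 1 else 0) := by
        intro m
        simp only [hρ']
        rw [← Finset.mul_sum, h2 (l, s, m) (l, t, m)]
        have hcond : ((l, s, m) = (l, t, m)) ↔ s = t := by simp [Prod.ext_iff]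
        rw [if_congr hcond rfl rfl]
      rw [Finset.sum_congr rfl fun m _ => inner2 m]
      simp [Finset.sum_const]
      ring
    rw [Finset.sum_congr rfl fun l _ => inner l]
    simp [Finset.sum_const, Matrix.smul_apply, Matrix.one_apply, hCLB, hCLC, mul_ite]
    by_cases hst : s = t <;> simp [hst] <;> push_cast <;> ring
  ----------------------------------------------------------------
  -- simplify coefficients to t := DR⁻¹ * DR
  have hcardFC : ((Fintype.card (ff × cc) : ℕ) : ℝ) = CF * CC := by
    rw [hCF, hCC]; push_cast [Fintype.card_prod]; ring
  have hcardUnit : ((Fintype.card Unit : ℕ) : ℝ) = 1 := by simp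
  have hcardIn : ((Fintype.card (lb × aa × lc) : ℕ) : ℝ) = DR := by
    rw [hDR]; push_cast [Fintype.card_prod]; ring
  have hcardLBA : ((Fintype.card (lb × aa) : ℕ) : ℝ) = CLB * CAA := by
    rw [hCLB, hCAA]; push_cast [Fintype.card_prod]; ring
  have hcardALC : ((Fintype.card (aa × lc) : ℕ) : ℝ) = CAA * CLC := by
    rw [hCAA, hCLC]; push_cast [Fintype.card_prod]; ring
  have hEρ' : vnEntropy ρ = (DR⁻¹ * DR) * (-Real.log (DR⁻¹ * DR)) := by
    rw [hEρ, hcardUnit]; ring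
  have hEB' : vnEntropy ρ_B_in = (DR⁻¹ * DR) * (-Real.log (DR⁻¹ * CB)) := by
    rw [hEB, hcardFC]
    have : DR⁻¹ * CB * (CF * CC) = DR⁻¹ * DR := by rw [← hprodOut]; ring
    rw [this]
  have hEFC' : vnEntropy ρ_FC_in = (DR⁻¹ * DR) * (-Real.log (DR⁻¹ * (CF * CC))) := by
    rw [hEFC, ← hCB]
    have : DR⁻¹ * (CF * CC) * CB = DR⁻¹ * DR := by rw [← hprodOut]; ring
    rw [this]
  have hEin' : vnEntropy ρ_in = (DR⁻¹ * DR) * (-Real.log (DR⁻¹)) := by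
    rw [hEin, hcardIn]
  have hELBA' : vnEntropy ρ_LB_A = (DR⁻¹ * DR) * (-Real.log (DR⁻¹ * CLC)) := by
    rw [hELBA, hcardLBA]
    have : DR⁻¹ * CLC * (CLB * CAA) = DR⁻¹ * DR := by rw [← hprodIn]; ring
    rw [this]
  have hEALC' : vnEntropy ρ_A_LC = (DR⁻¹ * DR) * (-Real.log (DR⁻¹ * CLB)) := by
    rw [hEALC, hcardALC]
    have : DR⁻¹ * CLB * (CAA * CLC) = DR⁻¹ * DR := by rw [← hprodIn]; ring
    rw [this]
  have hEA' : vnEntropy ρ_A = (DR⁻¹ * DR) * (-Real.log (DR⁻¹ * (CLB * CLC))) := by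
    rw [hEA, ← hCAA]
    have : DR⁻¹ * (CLB * CLC) * CAA = DR⁻¹ * DR := by rw [← hprodIn]; ring
    rw [this]
  ----------------------------------------------------------------
  rw [hEρ', hEB', hEFC', hEin', hELBA', hEALC', hEA']
  by_cases hDR0 : DR = 0
  · constructor <;> simp [hDR0]
  · have ht1 : DR⁻¹ * DR = 1 := inv_mul_cancel₀ hDR0
    have hCBne : CB ≠ 0 := fun h => hDR0 (by rw [← hprodOut, h]; ring)
    have hCFne : CF ≠ 0 := fun h => hDR0 (by rw [← hprodOut, h]; ring)
    have hCCne : CC ≠ 0 := fun h => hDR0 (by rw [← hprodOut, h]; ring)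
    have hCLBne : CLB ≠ 0 := fun h => hDR0 (by rw [← hprodIn, h]; ring)
    have hCAAne : CAA ≠ 0 := fun h => hDR0 (by rw [← hprodIn, h]; ring)
    have hCLCne : CLC ≠ 0 := fun h => hDR0 (by rw [← hprodIn, h]; ring)
    have hinvne : DR⁻¹ ≠ 0 := inv_ne_zero hDR0
    rw [ht1, Real.log_one]
    constructor
    · rw [Real.log_mul hinvne hCBne, Real.log_mul hinvne (mul_ne_zero hCFne hCCne),
        Real.log_mul hCFne hCCne, Real.log_inv]
      have hlog : Real.log CB + Real.log CF + Real.log CC = Real.log DR := by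
        rw [← hprodOut, Real.log_mul (mul_ne_zero hCBne hCFne) hCCne,
          Real.log_mul hCBne hCFne]
      ring_nf
      linarith
    · rw [Real.log_mul hinvne hCLCne, Real.log_mul hinvne hCLBne,
        Real.log_mul hinvne (mul_ne_zero hCLBne hCLCne),
        Real.log_mul hCLBne hCLCne, Real.log_inv]
      ring_nf

end
end

section
/- Let (Λ, Σ) be a measurable space with probability measures μ, ν, χ. Suppose there are measurable functions p₁, p₂, p₃ : Λ → [0,1] with p₁ + p₂ + p₃ = 1 pointwise, and ∫ p₁ dμ ≤ ε, ∫ p₂ dν ≤ ε, ∫ p₃ dχ ≤ ε for some ε ∈ [0,1). Fix κ ∈ (2ε, 1). Then for every Ω ∈ Σ with ν(Ω) > 1 − ε/κ and χ(Ω) > 1 − ε/κ, there exist Ω′, Ω″ ∈ Σ such that ν(Ω′) > 1 − 2ε/κ, χ(Ω″) > 1 − 2ε/κ, and μ(Ω) ≥ (1 − κ)(μ(Ω′) + μ(Ω″)) − ε. -/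
open MeasureTheory

lemma stmt17_integ {Λ : Type*} [MeasurableSpace Λ] (m : Measure Λ) [IsFiniteMeasure m]
    (f : Λ → ℝ) (hf : Measurable f) (h0 : ∀ l, 0 ≤ f l) (h1 : ∀ l, f l ≤ 1) :
    Integrable f m :=
  (integrable_const 1).mono' hf.aestronglyMeasurable
    (ae_of_all _ fun l => by rw [Real.norm_eq_abs, abs_of_nonneg (h0 l)]; exact h1 l)

/-- Markov-type bound: the bad set where `κ ≤ f` has measure ≤ ε/κ. -/
lemma stmt17_markov {Λ : Type*} [MeasurableSpace Λ] (m : Measure Λ) [IsFiniteMeasure m]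
    (f : Λ → ℝ) (hf : Measurable f) (h0 : ∀ l, 0 ≤ f l) (h1 : ∀ l, f l ≤ 1)
    (ε κ : ℝ) (hκ : 0 < κ) (hint : ∫ l, f l ∂m ≤ ε) :
    (m {l | κ ≤ f l}).toReal ≤ ε / κ := by
  have h := mul_meas_ge_le_integral_of_nonneg (ae_of_all m h0)
    (stmt17_integ m f hf h0 h1) κ
  rw [le_div_iff₀ hκ, mul_comm]
  exact h.trans hint

theorem stmt17 {Λ : Type*} [MeasurableSpace Λ] (μ ν χ : Measure Λ)
    [IsProbabilityMeasure μ] [IsProbabilityMeasure ν] [IsProbabilityMeasure χ]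
    (p₁ p₂ p₃ : Λ → ℝ)
    (hm₁ : Measurable p₁) (hm₂ : Measurable p₂) (hm₃ : Measurable p₃)
    (h₁0 : ∀ l, 0 ≤ p₁ l) (h₁1 : ∀ l, p₁ l ≤ 1)
    (h₂0 : ∀ l, 0 ≤ p₂ l) (h₂1 : ∀ l, p₂ l ≤ 1)
    (h₃0 : ∀ l, 0 ≤ p₃ l) (h₃1 : ∀ l, p₃ l ≤ 1)
    (hsum : ∀ l, p₁ l + p₂ l + p₃ l = 1)
    (ε : ℝ) (hε0 : 0 ≤ ε) (hε1 : ε < 1)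
    (hμ : ∫ l, p₁ l ∂μ ≤ ε) (hν : ∫ l, p₂ l ∂ν ≤ ε) (hχ : ∫ l, p₃ l ∂χ ≤ ε)
    (κ : ℝ) (hκ0 : 2 * ε < κ) (hκ1 : κ < 1)
    (Ω : Set Λ) (hΩ : MeasurableSet Ω)
    (hνΩ : 1 - ε / κ < (ν Ω).toReal) (hχΩ : 1 - ε / κ < (χ Ω).toReal) :
    ∃ Ω' Ω'' : Set Λ, MeasurableSet Ω' ∧ MeasurableSet Ω'' ∧
      1 - 2 * ε / κ < (ν Ω').toReal ∧ 1 - 2 * ε / κ < (χ Ω'').toReal ∧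
      (1 - κ) * ((μ Ω').toReal + (μ Ω'').toReal) - ε ≤ (μ Ω).toReal := by
  have hκpos : 0 < κ := lt_of_le_of_lt (by positivity) hκ0
  -- Bad sets
  set Bφ : Set Λ := {l | κ ≤ p₂ l} with hBφdef
  set B₀ : Set Λ := {l | κ ≤ p₃ l} with hB₀def
  have hBφmeas : MeasurableSet Bφ := measurableSet_le measurable_const hm₂
  have hB₀meas : MeasurableSet B₀ := measurableSet_le measurable_const hm₃
  have hBφ : (ν Bφ).toReal ≤ ε / κ := stmt17_markov ν p₂ hm₂ h₂0 h₂1 ε κ hκpos hν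
  have hB₀ : (χ B₀).toReal ≤ ε / κ := stmt17_markov χ p₃ hm₃ h₃0 h₃1 ε κ hκpos hχ
  refine ⟨Ω \ Bφ, Ω \ B₀, hΩ.diff hBφmeas, hΩ.diff hB₀meas, ?_, ?_, ?_⟩
  · -- ν bound
    have h1 : ν Ω ≤ ν (Ω \ Bφ) + ν Bφ := by
      calc ν Ω ≤ ν ((Ω \ Bφ) ∪ Bφ) := measure_mono (fun x hx => by
        by_cases h : x ∈ Bφ
        · exact Or.inr h
        · exact Or.inl ⟨hx, h⟩)
      _ ≤ ν (Ω \ Bφ) + ν Bφ := measure_union_le _ _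
    have h2 : (ν Ω).toReal ≤ (ν (Ω \ Bφ)).toReal + (ν Bφ).toReal := by
      rw [← ENNReal.toReal_add (measure_ne_top _ _) (measure_ne_top _ _)]
      exact ENNReal.toReal_mono (by finiteness) h1
    have hr : 2 * ε / κ = ε / κ + ε / κ := by ring
    linarith
  · have h1 : χ Ω ≤ χ (Ω \ B₀) + χ B₀ := by
      calc χ Ω ≤ χ ((Ω \ B₀) ∪ B₀) := measure_mono (fun x hx => by
        by_cases h : x ∈ B₀
        · exact Or.inr h
        · exact Or.inl ⟨hx, h⟩)
      _ ≤ χ (Ω \ B₀) + χ B₀ := measure_union_le _ _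
    have h2 : (χ Ω).toReal ≤ (χ (Ω \ B₀)).toReal + (χ B₀).toReal := by
      rw [← ENNReal.toReal_add (measure_ne_top _ _) (measure_ne_top _ _)]
      exact ENNReal.toReal_mono (by finiteness) h1
    have hr : 2 * ε / κ = ε / κ + ε / κ := by ring
    linarith
  · -- Main inequality
    set gφ : Λ → ℝ := fun l => p₁ l + p₃ l with hgφ
    set g₀ : Λ → ℝ := fun l => p₁ l + p₂ l with hg₀
    have hgφm : Measurable gφ := hm₁.add hm₃
    have hg₀m : Measurable g₀ := hm₁.add hm₂
    have hgφ0 : ∀ l, 0 ≤ gφ l := fun l => add_nonneg (h₁0 l) (h₃0 l)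
    have hgφ1 : ∀ l, gφ l ≤ 1 := fun l => by have := hsum l; have := h₂0 l; simp only [hgφ]; linarith
    have hg₀0 : ∀ l, 0 ≤ g₀ l := fun l => add_nonneg (h₁0 l) (h₂0 l)
    have hg₀1 : ∀ l, g₀ l ≤ 1 := fun l => by have := hsum l; have := h₃0 l; simp only [hg₀]; linarith
    have intφ : Integrable gφ μ := stmt17_integ μ gφ hgφm hgφ0 hgφ1
    have int₀ : Integrable g₀ μ := stmt17_integ μ g₀ hg₀m hg₀0 hg₀1
    have int₁ : Integrable p₁ μ := stmt17_integ μ p₁ hm₁ h₁0 h₁1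
    -- μ Ω = ∫_Ω (gφ + g₀ - p₁)
    have key : (μ Ω).toReal = ∫ l in Ω, (gφ l + g₀ l - p₁ l) ∂μ := by
      have : ∀ l, gφ l + g₀ l - p₁ l = 1 := fun l => by
        have := hsum l; simp only [hgφ, hg₀]; linarith
      simp only [this]
      simp [Measure.restrict_apply_univ]
      rfl
    have split : ∫ l in Ω, (gφ l + g₀ l - p₁ l) ∂μ
        = (∫ l in Ω, gφ l ∂μ) + (∫ l in Ω, g₀ l ∂μ) - ∫ l in Ω, p₁ l ∂μ := by
      have intF : Integrable (fun l => gφ l + g₀ l) μ := intφ.add int₀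
      rw [integral_sub intF.integrableOn int₁.integrableOn,
        integral_add intφ.integrableOn int₀.integrableOn]
    -- lower bounds for each piece
    have hφ : (1 - κ) * (μ (Ω \ Bφ)).toReal ≤ ∫ l in Ω, gφ l ∂μ := by
      have hsub : ∫ l in (Ω \ Bφ), gφ l ∂μ ≤ ∫ l in Ω, gφ l ∂μ :=
        setIntegral_mono_set intφ.integrableOn (ae_of_all _ hgφ0)
          (HasSubset.Subset.eventuallyLE Set.diff_subset)
      refine le_trans ?_ hsub
      have hconst : ∫ l in (Ω \ Bφ), (1 - κ) ∂μ ≤ ∫ l in (Ω \ Bφ), gφ l ∂μ := by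
        apply setIntegral_mono_on integrableOn_const
          intφ.integrableOn (hΩ.diff hBφmeas)
        intro x hx
        have hx2 : ¬ κ ≤ p₂ x := hx.2
        have := hsum x
        simp only [hgφ]
        linarith [not_le.mp hx2]
      rwa [setIntegral_const, smul_eq_mul, mul_comm] at hconst
    have h₀' : (1 - κ) * (μ (Ω \ B₀)).toReal ≤ ∫ l in Ω, g₀ l ∂μ := by
      have hsub : ∫ l in (Ω \ B₀), g₀ l ∂μ ≤ ∫ l in Ω, g₀ l ∂μ :=
        setIntegral_mono_set int₀.integrableOn (ae_of_all _ hg₀0)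
          (HasSubset.Subset.eventuallyLE Set.diff_subset)
      refine le_trans ?_ hsub
      have hconst : ∫ l in (Ω \ B₀), (1 - κ) ∂μ ≤ ∫ l in (Ω \ B₀), g₀ l ∂μ := by
        apply setIntegral_mono_on integrableOn_const
          int₀.integrableOn (hΩ.diff hB₀meas)
        intro x hx
        have hx2 : ¬ κ ≤ p₃ x := hx.2
        have := hsum x
        simp only [hg₀]
        linarith [not_le.mp hx2]
      rwa [setIntegral_const, smul_eq_mul, mul_comm] at hconst
    have hp₁ : ∫ l in Ω, p₁ l ∂μ ≤ ε :=
      le_trans (setIntegral_le_integral int₁ (ae_of_all _ h₁0)) hμ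
    rw [key, split]
    linarith
end

section
/- Let (Λ, Σ) be a measurable space, and let γ : Σ × Λ → [0,1] be a Markov kernel (for each λ, γ(·|λ) is a probability measure; for each Ω ∈ Σ, γ(Ω|·) is measurable). Let μ′, χ be probability measures and define their push-forwards μ(Ω) := ∫ γ(Ω|λ) dμ′(λ), ν(Ω) := ∫ γ(Ω|λ) dχ(λ). Fix 0 ≤ ε ≤ δ < 1 with δ > 0. Then for every Ω ∈ Σ with ν(Ω) > 1 − ε, there exists Ω′ ∈ Σ with χ(Ω′) > 1 − δ and μ(Ω) ≥ (1 − ε/δ)·μ′(Ω′). -/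
open MeasureTheory ProbabilityTheory

theorem stmt19 {Λ : Type*} [MeasurableSpace Λ]
    (γ : Kernel Λ Λ) [IsMarkovKernel γ]
    (μ' χ : Measure Λ) [IsProbabilityMeasure μ'] [IsProbabilityMeasure χ]
    (ε δ : ℝ) (hε0 : 0 ≤ ε) (hεδ : ε ≤ δ) (hδ0 : 0 < δ) (hδ1 : δ < 1)
    (Ω : Set Λ) (hΩ : MeasurableSet Ω)
    (hνΩ : 1 - ε < ((χ.bind γ) Ω).toReal) :
    ∃ Ω' : Set Λ, MeasurableSet Ω' ∧ 1 - δ < (χ Ω').toReal ∧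
      (1 - ε / δ) * (μ' Ω').toReal ≤ ((μ'.bind γ) Ω).toReal := by
  set f : Λ → ℝ := fun l => ((γ l) Ω).toReal with hf
  have hγle : ∀ l, (γ l) Ω ≤ 1 := fun l => by
    simpa using measure_mono (μ := γ l) (Set.subset_univ Ω)
  have hγlt : ∀ l, (γ l) Ω < ⊤ := fun l => lt_of_le_of_lt (hγle l) (by simp)
  have hf0 : ∀ l, 0 ≤ f l := fun l => ENNReal.toReal_nonneg
  have hf1 : ∀ l, f l ≤ 1 := fun l => by
    simpa [hf] using ENNReal.toReal_le_of_le_ofReal zero_le_one (by simpa using hγle l)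
  have hfmeas : Measurable f := (γ.measurable_coe hΩ).ennreal_toReal
  have hfint : ∀ (m : Measure Λ) [IsProbabilityMeasure m], Integrable f m := by
    intro m _
    refine ⟨hfmeas.aestronglyMeasurable, HasFiniteIntegral.of_bounded (C := 1) ?_⟩
    filter_upwards with l
    rw [Real.norm_eq_abs, abs_of_nonneg (hf0 l)]; exact hf1 l
  have hbind : ∀ (m : Measure Λ), ((m.bind γ) Ω).toReal = ∫ l, f l ∂m := by
    intro m
    rw [Measure.bind_apply hΩ (Kernel.measurable γ).aemeasurable,
      ← integral_toReal ((γ.measurable_coe hΩ)).aemeasurable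
        (Filter.Eventually.of_forall hγlt)]
  set κ := ε / δ with hκ
  have hκ0 : 0 ≤ κ := div_nonneg hε0 hδ0.le
  have hκ1 : κ ≤ 1 := (div_le_one hδ0).mpr hεδ
  refine ⟨{l | 1 - κ < f l}, hfmeas measurableSet_Ioi, ?_, ?_⟩
  · -- χ bound
    set A : Set Λ := {l | 1 - κ < f l}ᶜ with hA
    have hAmeas : MeasurableSet A := (hfmeas measurableSet_Ioi).compl
    have hAle : ∀ l ∈ A, κ ≤ 1 - f l := by
      intro l hl
      have : f l ≤ 1 - κ := not_lt.mp hl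
      linarith
    have hg : Integrable (fun l => 1 - f l) χ := (integrable_const 1).sub (hfint χ)
    have h1 : κ * (χ A).toReal ≤ ∫ l in A, (1 - f l) ∂χ :=
      setIntegral_ge_of_const_le_real hAmeas (measure_ne_top χ A) hAle (hg.integrableOn)
    have h2 : ∫ l in A, (1 - f l) ∂χ ≤ ∫ l, (1 - f l) ∂χ :=
      setIntegral_le_integral hg (Filter.Eventually.of_forall fun l => by
        simpa using hf1 l)
    have h3 : ∫ l, (1 - f l) ∂χ = 1 - ∫ l, f l ∂χ := by
      rw [integral_sub (integrable_const 1) (hfint χ)]; simp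
    have hν := hbind χ
    have hAlt : κ * (χ A).toReal < ε := by
      calc κ * (χ A).toReal ≤ 1 - ∫ l, f l ∂χ := by linarith
      _ < ε := by rw [← hν]; linarith
    have hcompl : (χ {l | 1 - κ < f l}).toReal = 1 - (χ A).toReal := by
      have hc := measure_compl (μ := χ) (s := {l | 1 - κ < f l}) (hfmeas measurableSet_Ioi) (measure_ne_top χ _)
      rw [hA, hc]
      rw [ENNReal.toReal_sub_of_le (measure_mono (Set.subset_univ _)) (measure_ne_top χ _)]
      simp
    rw [hcompl]
    have hε0' : 0 < ε := by
      by_contra h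
      push_neg at h
      have : ε = 0 := le_antisymm h hε0
      have hle : ((χ.bind γ) Ω).toReal ≤ 1 := by
        rw [hbind χ]
        calc ∫ l, f l ∂χ ≤ ∫ l, (1:ℝ) ∂χ := integral_mono (hfint χ) (integrable_const 1) hf1
        _ = 1 := by simp
      linarith
    have hκpos : 0 < κ := div_pos hε0' hδ0
    have hAδ : (χ A).toReal < δ := by
      have h2' : ε * (χ A).toReal < ε * δ := by
        rw [hκ, div_mul_eq_mul_div] at hAlt
        have := (div_lt_iff₀ hδ0).mp hAlt
        linarith
      exact (mul_lt_mul_iff_right₀ hε0').mp h2'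
    linarith
  · -- μ' bound
    rw [hbind μ']
    have hint := hfint μ'
    calc (1 - κ) * (μ' {l | 1 - κ < f l}).toReal
        ≤ ∫ l in {l | 1 - κ < f l}, f l ∂μ' :=
          setIntegral_ge_of_const_le_real (hfmeas measurableSet_Ioi) (measure_ne_top μ' _)
            (fun l hl => le_of_lt hl) hint.integrableOn
      _ ≤ ∫ l, f l ∂μ' := setIntegral_le_integral hint
          (Filter.Eventually.of_forall hf0)
end
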